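/- arXiv:1601.01210 — 13 statements merged into one kernel-verified Lean document; each statement's English description precedes it below -/
import Mathlib

section
/- Let F: K^n → K^n be a polynomial map of the form F = Id + H where each component of H has lower degree ≥ 2, let T ∈ GL(n,K), and let F̃ = T^{-1} ∘ F ∘ T. Then for the associated sequences of polynomial maps P_k (for F) and P̃_k (for F̃), one has P̃_k = T^{-1} ∘ P_k ∘ T for all k ≥ 1. In particular, if F is nice then F̃ is nice. -/
open MvPolynomial Finset

noncomputable def seqP {K : Type*} [Field K] {n : ℕ}
    (F : Fin n → MvPolynomial (Fin n) K) : ℕ → Fin n → MvPolynomial (Fin n) K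
  | 0 => fun i => X i
  | k + 1 => fun i => bind₁ F (seqP F k i) - seqP F k i

/-- Composition of polynomial maps: `(polyComp F G)(x) = F(G(x))`. -/
noncomputable def polyComp {K : Type*} [Field K] {n : ℕ}
    (F G : Fin n → MvPolynomial (Fin n) K) : Fin n → MvPolynomial (Fin n) K :=
  fun i => bind₁ G (F i)

/-- The polynomial map associated to a matrix `T`. -/
noncomputable def linMap {K : Type*} [Field K] {n : ℕ}
    (T : Matrix (Fin n) (Fin n) K) : Fin n → MvPolynomial (Fin n) K :=
  fun i => ∑ j, T i j • X j

lemma bind₁_linMap {K : Type*} [Field K] {n : ℕ}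
    (G : Fin n → MvPolynomial (Fin n) K) (A : Matrix (Fin n) (Fin n) K) (i : Fin n) :
    bind₁ G (linMap A i) = ∑ j, A i j • G j := by
  simp [linMap, map_sum]

lemma polyComp_linMap_left {K : Type*} [Field K] {n : ℕ}
    (A : Matrix (Fin n) (Fin n) K) (G : Fin n → MvPolynomial (Fin n) K) :
    polyComp (linMap A) G = fun i => ∑ j, A i j • G j := by
  funext i; exact bind₁_linMap G A i

lemma polyComp_assoc {K : Type*} [Field K] {n : ℕ}
    (F G H : Fin n → MvPolynomial (Fin n) K) :
    polyComp (polyComp F G) H = polyComp F (polyComp G H) := by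
  funext i
  simp only [polyComp]
  exact bind₁_bind₁ G H (F i)

lemma linMap_comp {K : Type*} [Field K] {n : ℕ}
    (A B : Matrix (Fin n) (Fin n) K) (G : Fin n → MvPolynomial (Fin n) K) :
    polyComp (linMap A) (polyComp (linMap B) G) = polyComp (linMap (A * B)) G := by
  rw [polyComp_linMap_left, polyComp_linMap_left, polyComp_linMap_left]
  funext i
  simp only [Finset.smul_sum, smul_smul, Matrix.mul_apply, Finset.sum_smul]
  exact Finset.sum_comm

lemma linMap_mul {K : Type*} [Field K] {n : ℕ}
    (A B : Matrix (Fin n) (Fin n) K) :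
    polyComp (linMap A) (linMap B) = linMap (A * B) := by
  funext i
  show bind₁ (linMap B) (linMap A i) = _
  rw [bind₁_linMap]
  simp only [linMap, Finset.smul_sum, smul_smul, Matrix.mul_apply, Finset.sum_smul]
  exact Finset.sum_comm

lemma linMap_one_comp {K : Type*} [Field K] {n : ℕ}
    (G : Fin n → MvPolynomial (Fin n) K) :
    polyComp (linMap (1 : Matrix (Fin n) (Fin n) K)) G = G := by
  rw [polyComp_linMap_left]
  funext i
  simp [Matrix.one_apply]

lemma polyComp_X_left {K : Type*} [Field K] {n : ℕ}
    (G : Fin n → MvPolynomial (Fin n) K) :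
    polyComp (fun i => X i) G = G := by
  funext i; simp [polyComp]

/-- If `F = Id + H` with `H` of lower degree `≥ 2`, `T ∈ GL(n,K)` and
`F̃ = T⁻¹ ∘ F ∘ T`, then `P̃_k = T⁻¹ ∘ P_k ∘ T` for all `k ≥ 1`;
in particular if `F` is nice, then `F̃` is nice. -/
theorem stmt1 {K : Type*} [Field K] [CharZero K] {n : ℕ}
    (F H : Fin n → MvPolynomial (Fin n) K)
    (hFH : ∀ i, F i = X i + H i)
    (hH : ∀ i, ∀ d ∈ (H i).support, 2 ≤ d.sum fun _ e => e)
    (T : GL (Fin n) K)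
    (Ftil : Fin n → MvPolynomial (Fin n) K)
    (hFtil : Ftil = polyComp (linMap (↑T⁻¹ : Matrix (Fin n) (Fin n) K))
      (polyComp F (linMap (↑T : Matrix (Fin n) (Fin n) K)))) :
    (∀ k, 1 ≤ k →
      seqP Ftil k = polyComp (linMap (↑T⁻¹ : Matrix (Fin n) (Fin n) K))
        (polyComp (seqP F k) (linMap (↑T : Matrix (Fin n) (Fin n) K)))) ∧
    ((∃ m, ∀ i, seqP F m i = 0) → ∃ m, ∀ i, seqP Ftil m i = 0) := by
  set A : Matrix (Fin n) (Fin n) K := (↑T⁻¹ : Matrix (Fin n) (Fin n) K) with hA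
  set B : Matrix (Fin n) (Fin n) K := (↑T : Matrix (Fin n) (Fin n) K) with hB
  have hBA : B * A = 1 := by
    rw [hA, hB]
    exact_mod_cast T.mul_inv
  have key : ∀ k, seqP Ftil k = polyComp (linMap A) (polyComp (seqP F k) (linMap B)) := by
    intro k
    induction k with
    | zero =>
        show (fun i => X i) = _
        rw [show seqP F 0 = (fun i => X i) from rfl, polyComp_X_left, linMap_mul]
        rw [show A * B = 1 by
          rw [hA, hB]; exact_mod_cast T.inv_mul]
        funext i
        simp [linMap, Matrix.one_apply]
    | succ k ih =>
        have hBF : polyComp (linMap B) Ftil = polyComp F (linMap B) := by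
          rw [hFtil, linMap_comp, hBA, linMap_one_comp]
        funext i
        show bind₁ Ftil (seqP Ftil k i) - seqP Ftil k i = _
        rw [ih]
        have h1 : bind₁ Ftil (polyComp (linMap A) (polyComp (seqP F k) (linMap B)) i)
            = polyComp (linMap A) (polyComp (polyComp (seqP F k) F) (linMap B)) i := by
          show bind₁ Ftil (bind₁ (polyComp (seqP F k) (linMap B)) (linMap A i)) = _
          rw [bind₁_bind₁]
          show polyComp (linMap A) (polyComp (polyComp (seqP F k) (linMap B)) Ftil) i = _
          rw [polyComp_assoc, hBF, ← polyComp_assoc, polyComp_assoc, ← polyComp_assoc (seqP F k)]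
        rw [h1]
        have h2 : polyComp (seqP F (k+1)) (linMap B)
            = fun j => polyComp (polyComp (seqP F k) F) (linMap B) j
                - polyComp (seqP F k) (linMap B) j := by
          funext j
          show bind₁ (linMap B) (bind₁ F (seqP F k j) - seqP F k j) = _
          rw [map_sub]
          rfl
        rw [polyComp_linMap_left, h2, polyComp_linMap_left, polyComp_linMap_left]
        simp [smul_sub, Finset.sum_sub_distrib]
  constructor
  · intro k _; exact key k
  · rintro ⟨m, hm⟩
    refine ⟨m + 1, fun i => ?_⟩
    have hF1 : ∀ j, seqP F (m + 1) j = 0 := by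
      intro j
      show bind₁ F (seqP F m j) - seqP F m j = 0
      rw [hm j, map_zero, sub_zero]
    have := congrFun (key (m + 1)) i
    rw [this, polyComp_linMap_left]
    have : polyComp (seqP F (m + 1)) (linMap B) = fun _ => 0 := by
      funext j
      show bind₁ (linMap B) (seqP F (m + 1) j) = 0
      rw [hF1 j, map_zero]
    rw [this]
    simp
end

section
/- Every triangular polynomial map F: K^n → K^n, i.e. one of the form F_i(X) = X_i + H_i(X_{i+1},...,X_n) for i < n and F_n(X) = X_n, is nice: there exists m with P_m = 0 where P_0 = Id, P_1 = F - Id, P_k = P_{k-1} ∘ F - P_{k-1}. -/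
open MvPolynomial Finset

namespace NiceAux

variable {K : Type*} [Field K] {n : ℕ}

/-- Weighted degree of an exponent vector. -/
def Wd (w : Fin n → ℕ) (τ : Fin n →₀ ℕ) : ℕ := ∑ j, τ j * w j

lemma Wd_add (w : Fin n → ℕ) (σ τ : Fin n →₀ ℕ) :
    Wd w (σ + τ) = Wd w σ + Wd w τ := by
  simp [Wd, add_mul, Finset.sum_add_distrib]

lemma Wd_single (w : Fin n → ℕ) (j : Fin n) (m : ℕ) :
    Wd w (Finsupp.single j m) = m * w j := by
  rw [Wd, Finset.sum_eq_single j]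
  · simp
  · intro b _ hb; simp [Finsupp.single_apply, Ne.symm hb]
  · simp

lemma Wd_zero (w : Fin n → ℕ) : Wd w 0 = 0 := by simp [Wd]

/-- "All monomials have weighted degree ≤ d". -/
def DLE (w : Fin n → ℕ) (d : ℕ) (P : MvPolynomial (Fin n) K) : Prop :=
  ∀ τ ∈ P.support, Wd w τ ≤ d

/-- "All monomials have weighted degree < d". -/
def DLT (w : Fin n → ℕ) (d : ℕ) (P : MvPolynomial (Fin n) K) : Prop :=
  ∀ τ ∈ P.support, Wd w τ < d

variable {w : Fin n → ℕ}

lemma DLT.dle {d : ℕ} {P : MvPolynomial (Fin n) K} (h : DLT w d P) : DLE w d P :=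
  fun τ hτ => le_of_lt (h τ hτ)

lemma DLE.mono {d e : ℕ} {P : MvPolynomial (Fin n) K} (h : DLE w d P) (hde : d ≤ e) :
    DLE w e P := fun τ hτ => le_trans (h τ hτ) hde

lemma DLT.mono {d e : ℕ} {P : MvPolynomial (Fin n) K} (h : DLT w d P) (hde : d ≤ e) :
    DLT w e P := fun τ hτ => lt_of_lt_of_le (h τ hτ) hde

lemma DLE_zero {d : ℕ} : DLE w d (0 : MvPolynomial (Fin n) K) := by
  intro τ hτ; simp at hτ

lemma DLT_zero {d : ℕ} : DLT w d (0 : MvPolynomial (Fin n) K) := by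
  intro τ hτ; simp at hτ

lemma DLE.add {d : ℕ} {P Q : MvPolynomial (Fin n) K} (hP : DLE w d P) (hQ : DLE w d Q) :
    DLE w d (P + Q) := by
  intro τ hτ
  rcases Finset.mem_union.mp (MvPolynomial.support_add hτ) with h | h
  · exact hP τ h
  · exact hQ τ h

lemma DLT.add {d : ℕ} {P Q : MvPolynomial (Fin n) K} (hP : DLT w d P) (hQ : DLT w d Q) :
    DLT w d (P + Q) := by
  intro τ hτ
  rcases Finset.mem_union.mp (MvPolynomial.support_add hτ) with h | h
  · exact hP τ h
  · exact hQ τ h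

lemma DLE.mul {a b : ℕ} {P Q : MvPolynomial (Fin n) K} (hP : DLE w a P) (hQ : DLE w b Q) :
    DLE w (a + b) (P * Q) := by
  intro τ hτ
  classical
  rcases Finset.mem_add.mp (MvPolynomial.support_mul P Q hτ) with ⟨τ₁, h₁, τ₂, h₂, rfl⟩
  rw [Wd_add]
  exact add_le_add (hP τ₁ h₁) (hQ τ₂ h₂)

lemma DLE.mul_dlt {a b : ℕ} {P Q : MvPolynomial (Fin n) K} (hP : DLE w a P) (hQ : DLT w b Q) :
    DLT w (a + b) (P * Q) := by
  intro τ hτ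
  classical
  rcases Finset.mem_add.mp (MvPolynomial.support_mul P Q hτ) with ⟨τ₁, h₁, τ₂, h₂, rfl⟩
  rw [Wd_add]
  exact add_lt_add_of_le_of_lt (hP τ₁ h₁) (hQ τ₂ h₂)

lemma DLT.mul_dle {a b : ℕ} {P Q : MvPolynomial (Fin n) K} (hP : DLT w a P) (hQ : DLE w b Q) :
    DLT w (a + b) (P * Q) := by
  intro τ hτ
  classical
  rcases Finset.mem_add.mp (MvPolynomial.support_mul P Q hτ) with ⟨τ₁, h₁, τ₂, h₂, rfl⟩
  rw [Wd_add]
  exact add_lt_add_of_lt_of_le (hP τ₁ h₁) (hQ τ₂ h₂)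

lemma DLE_monomial {d : ℕ} {σ : Fin n →₀ ℕ} (c : K) (h : Wd w σ ≤ d) :
    DLE w d (monomial σ c) := by
  classical
  intro τ hτ
  rw [MvPolynomial.support_monomial] at hτ
  split_ifs at hτ with hc
  · simp at hτ
  · simp only [Finset.mem_singleton] at hτ; subst hτ; exact h

lemma DLE_X {j : Fin n} : DLE w (w j) (X j : MvPolynomial (Fin n) K) := by
  have : (X j : MvPolynomial (Fin n) K) = monomial (Finsupp.single j 1) 1 := by
    simp [MvPolynomial.X]
  rw [this]
  exact DLE_monomial _ (by rw [Wd_single]; omega)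

lemma DLE_one : DLE w 0 (1 : MvPolynomial (Fin n) K) := by
  have : (1 : MvPolynomial (Fin n) K) = monomial 0 1 := by simp
  rw [this]
  exact DLE_monomial _ (by rw [Wd_zero])

lemma DLE.pow {a : ℕ} {P : MvPolynomial (Fin n) K} (hP : DLE w a P) (m : ℕ) :
    DLE w (m * a) (P ^ m) := by
  induction m with
  | zero => simpa using DLE_one
  | succ m ih =>
      rw [pow_succ]
      exact (ih.mul hP).mono (le_of_eq (by ring))

lemma DLE.smul {d : ℕ} {P : MvPolynomial (Fin n) K} (hP : DLE w d P) (c : K) :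
    DLE w d (C c * P) := by
  intro τ hτ
  rw [← smul_eq_C_mul] at hτ
  exact hP τ (MvPolynomial.support_smul hτ)

lemma DLT.smul {d : ℕ} {P : MvPolynomial (Fin n) K} (hP : DLT w d P) (c : K) :
    DLT w d (C c * P) := by
  intro τ hτ
  rw [← smul_eq_C_mul] at hτ
  exact hP τ (MvPolynomial.support_smul hτ)

lemma DLE_sum {d : ℕ} {ι : Type*} (s : Finset ι) (f : ι → MvPolynomial (Fin n) K)
    (h : ∀ i ∈ s, DLE w d (f i)) : DLE w d (∑ i ∈ s, f i) := by
  classical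
  induction s using Finset.induction_on with
  | empty => simpa using DLE_zero
  | insert _ _ hx ih =>
      rename_i a s
      rw [Finset.sum_insert hx]
      exact (h a (Finset.mem_insert_self a s)).add
        (ih fun i hi => h i (Finset.mem_insert_of_mem hi))

lemma DLT_sum {d : ℕ} {ι : Type*} (s : Finset ι) (f : ι → MvPolynomial (Fin n) K)
    (h : ∀ i ∈ s, DLT w d (f i)) : DLT w d (∑ i ∈ s, f i) := by
  classical
  induction s using Finset.induction_on with
  | empty => simpa using DLT_zero
  | insert _ _ hx ih =>
      rename_i a s
      rw [Finset.sum_insert hx]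
      exact (h a (Finset.mem_insert_self a s)).add
        (ih fun i hi => h i (Finset.mem_insert_of_mem hi))

variable {F : Fin n → MvPolynomial (Fin n) K}

/-- `bind₁ F` preserves weighted-degree bounds. -/
lemma DLE_bind (hF : ∀ j, DLE w (w j) (F j)) {d : ℕ} {P : MvPolynomial (Fin n) K}
    (hP : DLE w d P) : DLE w d (bind₁ F P) := by
  classical
  have hrw : bind₁ F P = ∑ σ ∈ P.support, bind₁ F (monomial σ (P.coeff σ)) := by
    conv_lhs => rw [P.as_sum]
    rw [map_sum]
  rw [hrw]
  refine DLE_sum _ _ fun σ hσ => ?_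
  rw [bind₁_monomial]
  have hprod : DLE w (∑ j ∈ σ.support, σ j * w j) (∏ j ∈ σ.support, F j ^ σ j) := by
    induction σ.support using Finset.induction_on with
    | empty => simpa using DLE_one
    | insert _ _ hx ih =>
        rename_i a s
        rw [Finset.prod_insert hx, Finset.sum_insert hx]
        exact ((hF a).pow (σ a)).mul ih
  have hle : (∑ j ∈ σ.support, σ j * w j) ≤ d := by
    refine le_trans ?_ (hP σ hσ)
    rw [Wd]
    exact Finset.sum_le_sum_of_subset (Finset.subset_univ _)
  exact (hprod.mono hle).smul _

lemma pow_sub {a m : ℕ} {P Q : MvPolynomial (Fin n) K}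
    (hP : DLE w a P) (hQ : DLE w a Q) (hPQ : DLT w a (P - Q)) :
    DLT w (m * a) (P ^ m - Q ^ m) := by
  induction m with
  | zero => simpa using DLT_zero
  | succ m ih =>
      have key : P ^ (m + 1) - Q ^ (m + 1)
          = P * (P ^ m - Q ^ m) + (P - Q) * Q ^ m := by ring
      rw [key]
      have h1 : DLT w (a + m * a) (P * (P ^ m - Q ^ m)) := hP.mul_dlt ih
      have h2 : DLT w (a + m * a) ((P - Q) * Q ^ m) := hPQ.mul_dle (hQ.pow m)
      have := h1.add h2
      exact this.mono (by ring_nf; omega)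

/-- Key monomial estimate: applying `F` to a monomial and subtracting it strictly
drops the weighted degree. -/
lemma DLT_bind_monomial (hF : ∀ j, DLE w (w j) (F j))
    (hH : ∀ j, DLT w (w j) (F j - X j)) (σ : Fin n →₀ ℕ) :
    DLT w (Wd w σ + 1) (bind₁ F (monomial σ (1 : K)) - monomial σ 1) ∧
      (σ ≠ 0 → DLT w (Wd w σ) (bind₁ F (monomial σ (1 : K)) - monomial σ 1)) := by
  classical
  induction σ using Finsupp.induction with
  | zero =>
      constructor
      · intro τ hτ; simp at hτ
      · intro h; exact absurd rfl h
  | single_add j m τ hjτ hm ih =>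
      have key : DLT w (Wd w (Finsupp.single j m + τ))
          (bind₁ F (monomial (Finsupp.single j m + τ) (1 : K))
            - monomial (Finsupp.single j m + τ) 1) := by
        rw [monomial_single_add, map_mul, map_pow, bind₁_X_right]
        have split : (F j) ^ m * bind₁ F (monomial τ (1 : K)) - X j ^ m * monomial τ 1
            = (F j) ^ m * (bind₁ F (monomial τ (1 : K)) - monomial τ 1)
              + ((F j) ^ m - X j ^ m) * monomial τ 1 := by ring
        rw [split, Wd_add, Wd_single]
        have h1 : DLT w (m * w j + (Wd w τ + 1))
            ((F j) ^ m * (bind₁ F (monomial τ (1 : K)) - monomial τ 1)) :=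
          ((hF j).pow m).mul_dlt ih.1
        have hXj : DLE w (w j) (X j : MvPolynomial (Fin n) K) := DLE_X
        have h2 : DLT w (m * w j + Wd w τ) (((F j) ^ m - X j ^ m) * monomial τ 1) :=
          (pow_sub (hF j) hXj (hH j)).mul_dle (DLE_monomial _ le_rfl)
        -- h1 gives < m*wj + Wd τ + 1, not strict enough unless bind-monomial diff for τ
        -- is handled by second component when τ ≠ 0, or τ = 0 case separately.
        by_cases hτ0 : τ = 0
        · subst hτ0
          have : bind₁ F (monomial (0 : Fin n →₀ ℕ) (1 : K)) - monomial 0 1 = 0 := by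
            simp
          rw [this, mul_zero, zero_add]
          have := h2
          rw [Wd_zero] at this ⊢
          exact this
        · have h1' : DLT w (m * w j + Wd w τ)
              ((F j) ^ m * (bind₁ F (monomial τ (1 : K)) - monomial τ 1)) :=
            ((hF j).pow m).mul_dlt (ih.2 hτ0)
          exact h1'.add h2
      exact ⟨key.mono (Nat.le_succ _), fun _ => key⟩

/-- The difference operator strictly drops weighted degree. -/
lemma DLT_step (hF : ∀ j, DLE w (w j) (F j)) (hH : ∀ j, DLT w (w j) (F j - X j))
    {d : ℕ} {P : MvPolynomial (Fin n) K} (hP : DLE w d P) :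
    DLT w d (bind₁ F P - P) := by
  classical
  have hrw : ∑ σ ∈ P.support, C (P.coeff σ) * (bind₁ F (monomial σ (1 : K)) - monomial σ 1)
      = bind₁ F P - P := by
    have hterm : ∀ σ, C (P.coeff σ) * (bind₁ F (monomial σ (1 : K)) - monomial σ 1)
        = bind₁ F (monomial σ (P.coeff σ)) - monomial σ (P.coeff σ) := by
      intro σ
      have hm : (monomial σ) (P.coeff σ) = C (P.coeff σ) * monomial σ 1 := by
        rw [C_mul_monomial, mul_one]
      rw [hm, map_mul, bind₁_C_right, mul_sub]
    rw [Finset.sum_congr rfl fun σ _ => hterm σ, Finset.sum_sub_distrib, ← map_sum, ← P.as_sum]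
  rw [← hrw]
  refine DLT_sum _ _ fun σ hσ => ?_
  by_cases hσ0 : σ = 0
  · subst hσ0
    have : bind₁ F (monomial (0 : Fin n →₀ ℕ) (1 : K)) - monomial 0 1 = 0 := by simp
    rw [this, mul_zero]
    exact DLT_zero
  · exact (((DLT_bind_monomial hF hH σ).2 hσ0).mono (hP σ hσ)).smul _

end NiceAux

/-- Every triangular polynomial map, i.e. `F_i = X_i + H_i(X_{i+1},…,X_n)`
with `F_n = X_n`, is nice. -/
theorem stmt2 {K : Type*} [Field K] [CharZero K] {n : ℕ}
    (F : Fin n → MvPolynomial (Fin n) K)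
    (htri : ∀ i, F i - X i ∈ MvPolynomial.supported K {j : Fin n | i < j})
    (hlast : ∀ i : Fin n, (i : ℕ) = n - 1 → F i = X i) :
    ∃ m, ∀ i, seqP F m i = 0 := by
  classical
  open NiceAux in
  -- degree bound
  set D : ℕ := Finset.univ.sup fun j => (F j - X j).totalDegree with hD
  set d : ℕ := D + 1 with hd
  set w : Fin n → ℕ := fun j => d ^ (n - 1 - (j : ℕ)) with hw
  have hwpos : ∀ j, 1 ≤ w j := fun j => Nat.one_le_pow _ _ (by omega)
  -- strict bound on the H_j
  have hH : ∀ j, DLT w (w j) (F j - X j) := by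
    intro j τ hτ
    have hvars : ∀ i ∈ τ.support, j < i := by
      intro i hi
      have : i ∈ (F j - X j).vars := (MvPolynomial.mem_vars i).mpr ⟨τ, hτ, hi⟩
      exact (MvPolynomial.mem_supported.mp (htri j)) this
    by_cases hτ0 : τ = 0
    · subst hτ0; rw [Wd_zero]; exact hwpos j
    · obtain ⟨i₀, hi₀⟩ := Finsupp.support_nonempty_iff.mpr hτ0
      have hj2 : (j : ℕ) + 2 ≤ n := by
        have h1 := hvars i₀ hi₀
        have h2 := i₀.isLt
        omega
      have hstep : ∀ i : Fin n, τ i * w i ≤ τ i * d ^ (n - 2 - (j : ℕ)) := by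
        intro i
        by_cases hiz : τ i = 0
        · simp [hiz]
        · have hji : j < i := hvars i (Finsupp.mem_support_iff.mpr hiz)
          refine Nat.mul_le_mul_left _ ?_
          exact Nat.pow_le_pow_right (by omega) (by have := hji; omega)
      have hsum : Wd w τ ≤ (∑ i, τ i) * d ^ (n - 2 - (j : ℕ)) := by
        rw [Wd, Finset.sum_mul]
        exact Finset.sum_le_sum fun i _ => hstep i
      have hdeg : (∑ i, τ i) ≤ D := by
        have h1 : (τ.sum fun _ e => e) ≤ (F j - X j).totalDegree :=
          MvPolynomial.le_totalDegree hτ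
        have h2 : (F j - X j).totalDegree ≤ D := by
          rw [hD]
          exact Finset.le_sup (f := fun j => (F j - X j).totalDegree) (Finset.mem_univ j)
        have h3 : (τ.sum fun _ e => e) = ∑ i, τ i := by
          rw [Finsupp.sum_fintype]; intro _; rfl
        omega
      have hlt : D * d ^ (n - 2 - (j : ℕ)) < w j := by
        have : D * d ^ (n - 2 - (j : ℕ)) < d * d ^ (n - 2 - (j : ℕ)) :=
          Nat.mul_lt_mul_of_lt_of_le (by omega) le_rfl
            (Nat.pow_pos (by omega))
        calc D * d ^ (n - 2 - (j : ℕ)) < d * d ^ (n - 2 - (j : ℕ)) := this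
          _ = d ^ (n - 2 - (j : ℕ) + 1) := by rw [pow_succ, mul_comm]
          _ = w j := by rw [hw]; congr 1; omega
      calc Wd w τ ≤ (∑ i, τ i) * d ^ (n - 2 - (j : ℕ)) := hsum
        _ ≤ D * d ^ (n - 2 - (j : ℕ)) := Nat.mul_le_mul_right _ hdeg
        _ < w j := hlt
  have hF : ∀ j, DLE w (w j) (F j) := by
    intro j
    have h := (hH j).dle.add (DLE_X (j := j))
    rwa [sub_add_cancel] at h
  -- the uniform bound on P₁
  set B : ℕ := Finset.univ.sup fun i => (F i - X i).support.sup (Wd w) with hB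
  have hP1 : ∀ i, DLE w B (seqP F 1 i) := by
    intro i τ hτ
    have h1 : seqP F 1 i = F i - X i := by
      show bind₁ F (X i) - X i = F i - X i
      rw [bind₁_X_right]
    rw [h1] at hτ
    calc Wd w τ ≤ (F i - X i).support.sup (Wd w) := Finset.le_sup hτ
      _ ≤ B := by
        rw [hB]
        exact Finset.le_sup (f := fun i => (F i - X i).support.sup (Wd w))
          (Finset.mem_univ i)
  -- induction: degree decreases
  have hmain : ∀ k, ∀ i, DLE w (B - k) (seqP F (k + 1) i) := by
    intro k
    induction k with
    | zero => simpa using hP1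
    | succ k ih =>
        intro i
        have hstep : DLT w (B - k) (seqP F (k + 2) i) := by
          show DLT w (B - k) (bind₁ F (seqP F (k + 1) i) - seqP F (k + 1) i)
          exact DLT_step hF hH (ih i)
        intro τ hτ
        have := hstep τ hτ
        omega
  refine ⟨B + 2, fun i => ?_⟩
  have h0 : DLE w 0 (seqP F (B + 1) i) := by
    have := hmain B i
    simpa using this
  have h1 : DLT w 0 (seqP F (B + 2) i) := by
    show DLT w 0 (bind₁ F (seqP F (B + 1) i) - seqP F (B + 1) i)
    exact DLT_step hF hH h0
  have : (seqP F (B + 2) i).support = ∅ :=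
    Finset.eq_empty_of_forall_notMem fun τ hτ => by have := h1 τ hτ; omega
  exact MvPolynomial.support_eq_empty.mp this
end

section
/- Every triangulable polynomial automorphism (i.e. one of the form T^{-1} ∘ F ∘ T with T linear invertible and F triangular) is nice. -/
open MvPolynomial Finset

namespace StmtAux

variable {K : Type*} [Field K] {n : ℕ}

/-- weighted degree of a monomial -/
def wt (w : Fin n → ℕ) (m : Fin n →₀ ℕ) : ℕ := ∑ j, m j * w j

lemma wt_add (w : Fin n → ℕ) (m₁ m₂ : Fin n →₀ ℕ) :
    wt w (m₁ + m₂) = wt w m₁ + wt w m₂ := by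
  simp [wt, add_mul, Finset.sum_add_distrib]

lemma wt_single (w : Fin n → ℕ) (i : Fin n) (b : ℕ) :
    wt w (Finsupp.single i b) = b * w i := by
  simp [wt, Finsupp.single_apply]

/-- all monomials of `p` have weight `≤ a` -/
def wle (w : Fin n → ℕ) (p : MvPolynomial (Fin n) K) (a : ℕ) : Prop :=
  ∀ m ∈ p.support, wt w m ≤ a

/-- all monomials of `p` have weight `< a` -/
def slt (w : Fin n → ℕ) (p : MvPolynomial (Fin n) K) (a : ℕ) : Prop :=
  ∀ m ∈ p.support, wt w m < a

lemma slt.wle {w : Fin n → ℕ} {p : MvPolynomial (Fin n) K} {a : ℕ}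
    (h : slt w p a) : wle w p a := fun m hm => (h m hm).le

lemma wle_add {w : Fin n → ℕ} {p q : MvPolynomial (Fin n) K} {a : ℕ}
    (hp : wle w p a) (hq : wle w q a) : wle w (p + q) a := fun m hm => by
  rcases Finset.mem_union.mp (MvPolynomial.support_add hm) with h | h
  exacts [hp m h, hq m h]

lemma slt_add {w : Fin n → ℕ} {p q : MvPolynomial (Fin n) K} {a : ℕ}
    (hp : slt w p a) (hq : slt w q a) : slt w (p + q) a := fun m hm => by
  rcases Finset.mem_union.mp (MvPolynomial.support_add hm) with h | h
  exacts [hp m h, hq m h]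

lemma slt_zero {w : Fin n → ℕ} {a : ℕ} : slt w (0 : MvPolynomial (Fin n) K) a := by
  intro m hm; simp at hm

lemma wle_mul {w : Fin n → ℕ} {p q : MvPolynomial (Fin n) K} {a b : ℕ}
    (hp : wle w p a) (hq : wle w q b) : wle w (p * q) (a + b) := by
  classical
  intro m hm
  obtain ⟨m₁, hm₁, m₂, hm₂, rfl⟩ := Finset.mem_add.mp (MvPolynomial.support_mul p q hm)
  rw [wt_add]
  exact add_le_add (hp m₁ hm₁) (hq m₂ hm₂)

lemma slt_mul_wle {w : Fin n → ℕ} {p q : MvPolynomial (Fin n) K} {a b : ℕ}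
    (hp : slt w p a) (hq : wle w q b) : slt w (p * q) (a + b) := by
  classical
  intro m hm
  obtain ⟨m₁, hm₁, m₂, hm₂, rfl⟩ := Finset.mem_add.mp (MvPolynomial.support_mul p q hm)
  rw [wt_add]
  exact add_lt_add_of_lt_of_le (hp m₁ hm₁) (hq m₂ hm₂)

lemma wle_mul_slt {w : Fin n → ℕ} {p q : MvPolynomial (Fin n) K} {a b : ℕ}
    (hp : wle w p a) (hq : slt w q b) : slt w (p * q) (a + b) := by
  classical
  intro m hm
  obtain ⟨m₁, hm₁, m₂, hm₂, rfl⟩ := Finset.mem_add.mp (MvPolynomial.support_mul p q hm)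
  rw [wt_add]
  exact add_lt_add_of_le_of_lt (hp m₁ hm₁) (hq m₂ hm₂)

lemma slt_smul {w : Fin n → ℕ} {p : MvPolynomial (Fin n) K} {a : ℕ} (c : K)
    (hp : slt w p a) : slt w (c • p) a := fun m hm => hp m (MvPolynomial.support_smul hm)

lemma wle_X {w : Fin n → ℕ} (i : Fin n) : wle w (X i : MvPolynomial (Fin n) K) (w i) := by
  intro m hm
  rw [MvPolynomial.support_X, Finset.mem_singleton] at hm
  subst hm
  rw [wt_single, one_mul]

lemma wle_monomial {w : Fin n → ℕ} (m : Fin n →₀ ℕ) (c : K) :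
    wle w (monomial m c) (wt w m) := by
  intro m' hm'
  rcases Finset.mem_singleton.mp (MvPolynomial.support_monomial_subset hm') with rfl
  exact le_rfl

lemma slt_eq_zero {w : Fin n → ℕ} {p : MvPolynomial (Fin n) K}
    (h : slt w p 0) : p = 0 := by
  rw [← MvPolynomial.support_eq_empty, Finset.eq_empty_iff_forall_notMem]
  intro m hm
  exact Nat.not_lt_zero _ (h m hm)

noncomputable def del (F : Fin n → MvPolynomial (Fin n) K) (p : MvPolynomial (Fin n) K) :
    MvPolynomial (Fin n) K := bind₁ F p - p

lemma del_mul (F : Fin n → MvPolynomial (Fin n) K) (p q : MvPolynomial (Fin n) K) :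
    del F (p * q) = del F p * bind₁ F q + p * del F q := by
  simp only [del, map_mul]
  ring

variable {F : Fin n → MvPolynomial (Fin n) K} {w : Fin n → ℕ}

lemma wle_bind {p : MvPolynomial (Fin n) K} {a : ℕ}
    (hp : wle w p a) (hdp : slt w (del F p) a) : wle w (bind₁ F p) a := by
  have h : bind₁ F p = p + del F p := by simp [del]
  rw [h]
  exact wle_add hp hdp.wle

lemma slt_del_mul {p q : MvPolynomial (Fin n) K} {a b : ℕ}
    (hp : wle w p a) (hdp : slt w (del F p) a)
    (hq : wle w q b) (hdq : slt w (del F q) b) :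
    slt w (del F (p * q)) (a + b) := by
  rw [del_mul]
  exact slt_add (slt_mul_wle hdp (wle_bind hq hdq)) (wle_mul_slt hp hdq)

lemma slt_del_pow (hF : ∀ i, slt w (F i - X i) (w i)) (i : Fin n) (b : ℕ) :
    wle w ((X i : MvPolynomial (Fin n) K) ^ b) (b * w i) ∧
      slt w (del F ((X i : MvPolynomial (Fin n) K) ^ b)) (b * w i) := by
  induction b with
  | zero =>
    constructor
    · have h1 : (X i : MvPolynomial (Fin n) K) ^ 0 = monomial 0 1 := by
        simp [monomial_zero']
      rw [h1]
      have h2 := wle_monomial (K := K) (w := w) (0 : Fin n →₀ ℕ) 1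
      have h3 : wt w (0 : Fin n →₀ ℕ) = 0 := by simp [wt]
      rw [h3] at h2
      simpa using h2
    · have h0 : del F ((X i : MvPolynomial (Fin n) K) ^ 0) = 0 := by simp [del]
      rw [h0]; exact slt_zero
  | succ b ih =>
    have hX : slt w (del F (X i : MvPolynomial (Fin n) K)) (w i) := by
      have h : del F (X i : MvPolynomial (Fin n) K) = F i - X i := by simp [del]
      rw [h]; exact hF i
    have key := slt_del_mul (wle_X i) hX ih.1 ih.2
    have hle := wle_mul (wle_X (w := w) (K := K) i) ih.1
    have hpow : (X i : MvPolynomial (Fin n) K) ^ (b + 1) = X i * X i ^ b := by ring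
    have harith : w i + b * w i = (b + 1) * w i := by ring
    rw [hpow]
    exact ⟨harith ▸ hle, harith ▸ key⟩

lemma slt_del_monomial (hF : ∀ i, slt w (F i - X i) (w i)) (m : Fin n →₀ ℕ) :
    slt w (del F (monomial m (1 : K))) (wt w m) := by
  classical
  induction m using Finsupp.induction with
  | zero =>
    have h : del F (monomial (0 : Fin n →₀ ℕ) (1 : K)) = 0 := by
      simp [del, monomial_zero']
    rw [h]; exact slt_zero
  | single_add i b f hif hb ih =>
    have hmono : (monomial (Finsupp.single i b + f) (1 : K)) =
        (X i : MvPolynomial (Fin n) K) ^ b * monomial f 1 := by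
      rw [X_pow_eq_monomial, monomial_mul, one_mul]
    rw [hmono, wt_add, wt_single]
    exact slt_del_mul (slt_del_pow hF i b).1 (slt_del_pow hF i b).2
      (wle_monomial f 1) ih

lemma del_sum {α : Type*} (s : Finset α) (g : α → MvPolynomial (Fin n) K) :
    del F (∑ x ∈ s, g x) = ∑ x ∈ s, del F (g x) := by
  simp [del, Finset.sum_sub_distrib]

lemma del_smul (c : K) (p : MvPolynomial (Fin n) K) :
    del F (c • p) = c • del F p := by
  simp [del, smul_sub]

lemma slt_del (hF : ∀ i, slt w (F i - X i) (w i)) {p : MvPolynomial (Fin n) K} {a : ℕ}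
    (hp : wle w p a) : slt w (del F p) a := by
  classical
  intro m hm
  rw [← MvPolynomial.support_sum_monomial_coeff p, del_sum] at hm
  obtain ⟨v, hv, hm'⟩ := Finset.mem_biUnion.mp (MvPolynomial.support_sum hm)
  have hsm : (monomial v (coeff v p) : MvPolynomial (Fin n) K)
      = (coeff v p) • monomial v 1 := by
    rw [smul_monomial, smul_eq_mul, mul_one]
  rw [hsm, del_smul] at hm'
  have := slt_smul (coeff v p) (slt_del_monomial hF v) m hm'
  exact lt_of_lt_of_le this (hp v hv)

lemma del_iter (hF : ∀ i, slt w (F i - X i) (w i)) :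
    ∀ (a : ℕ) (p : MvPolynomial (Fin n) K), wle w p a → (del F)^[a + 1] p = 0 := by
  intro a
  induction a with
  | zero =>
    intro p hp
    rw [Function.iterate_one]
    exact slt_eq_zero (slt_del hF hp)
  | succ a ih =>
    intro p hp
    have h1 : wle w (del F p) a := fun m hm => Nat.lt_succ_iff.mp (slt_del hF hp m hm)
    rw [Function.iterate_succ_apply]
    exact ih _ h1

end StmtAux

open StmtAux in
/-- Every triangulable polynomial automorphism, i.e. one of the form
`T⁻¹ ∘ F ∘ T` with `T` linear invertible and `F` triangular, is nice. -/
theorem stmt3 {K : Type*} [Field K] [CharZero K] {n : ℕ}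
    (F : Fin n → MvPolynomial (Fin n) K)
    (htri : ∀ i, F i - X i ∈ MvPolynomial.supported K {j : Fin n | i < j})
    (hlast : ∀ i : Fin n, (i : ℕ) = n - 1 → F i = X i)
    (T : GL (Fin n) K)
    (G : Fin n → MvPolynomial (Fin n) K)
    (hG : G = polyComp (linMap (↑T⁻¹ : Matrix (Fin n) (Fin n) K))
      (polyComp F (linMap (↑T : Matrix (Fin n) (Fin n) K)))) :
    ∃ m, ∀ i, seqP G m i = 0 := by
  classical
  set D : ℕ := Finset.univ.sup (fun i => (F i - X i).totalDegree) with hD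
  set E : ℕ := D + 1 with hE'
  have hE : 1 ≤ E := Nat.succ_le_succ (Nat.zero_le _)
  set w : Fin n → ℕ := fun i => E ^ (n - 1 - (i : ℕ)) with hw
  -- the triangularity hypothesis in weight form
  have hF : ∀ i, slt w (F i - X i) (w i) := by
    intro i m hm
    have hvars : ∀ j : Fin n, m j ≠ 0 → (i : ℕ) < (j : ℕ) := by
      intro j hj
      have hjv : j ∈ (F i - X i).vars :=
        (MvPolynomial.mem_vars j).mpr ⟨m, hm, Finsupp.mem_support_iff.mpr hj⟩
      have := MvPolynomial.mem_supported.mp (htri i) hjv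
      exact this
    have hdeg : (∑ j, m j) ≤ D := by
      have h1 : (m.sum fun _ e => e) ≤ (F i - X i).totalDegree :=
        MvPolynomial.le_totalDegree hm
      have h2 : (m.sum fun _ e => e) = ∑ j, m j := by
        rw [Finsupp.sum_fintype]
        intro j; rfl
      have h3 : (F i - X i).totalDegree ≤ D :=
        Finset.le_sup (f := fun i => (F i - X i).totalDegree) (Finset.mem_univ i)
      omega
    by_cases hcase : (i : ℕ) + 1 < n
    · have hbound : ∀ j : Fin n, m j * w j ≤ m j * E ^ (n - 2 - (i : ℕ)) := by
        intro j
        by_cases hj : m j = 0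
        · simp [hj]
        · have hij : (i : ℕ) < (j : ℕ) := hvars j hj
          have hexp : n - 1 - (j : ℕ) ≤ n - 2 - (i : ℕ) := by omega
          exact Nat.mul_le_mul_left _ (Nat.pow_le_pow_right hE hexp)
      have hEpos : 0 < E ^ (n - 2 - (i : ℕ)) := Nat.pow_pos (by omega)
      calc wt w m = ∑ j, m j * w j := rfl
        _ ≤ ∑ j, m j * E ^ (n - 2 - (i : ℕ)) := Finset.sum_le_sum fun j _ => hbound j
        _ = (∑ j, m j) * E ^ (n - 2 - (i : ℕ)) := by rw [Finset.sum_mul]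
        _ ≤ D * E ^ (n - 2 - (i : ℕ)) := Nat.mul_le_mul_right _ hdeg
        _ < E * E ^ (n - 2 - (i : ℕ)) := by
            exact Nat.mul_lt_mul_of_lt_of_le (Nat.lt_succ_self D) le_rfl hEpos
        _ = w i := by
            rw [hw, ← pow_succ']
            congr 1
            omega
    · have hm0 : ∀ j : Fin n, m j = 0 := by
        intro j
        by_contra hj
        have h1 := hvars j hj
        have h2 := j.isLt
        have h3 := i.isLt
        omega
      have hz : wt w m = 0 := Finset.sum_eq_zero fun j _ => by rw [hm0 j, zero_mul]
      rw [hz]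
      exact Nat.pow_pos (by omega)
  -- conjugation setup
  set A : Matrix (Fin n) (Fin n) K := (↑T : Matrix (Fin n) (Fin n) K) with hA
  set B : Matrix (Fin n) (Fin n) K := (↑T⁻¹ : Matrix (Fin n) (Fin n) K) with hB
  have hBA : B * A = 1 := by
    rw [hA, hB]
    exact_mod_cast Units.inv_mul T
  have hAB : A * B = 1 := by
    rw [hA, hB]
    exact_mod_cast Units.mul_inv T
  have bind_lin : ∀ (M N : Matrix (Fin n) (Fin n) K) (j : Fin n),
      bind₁ (linMap M) (linMap N j) = linMap (N * M) j := by
    intro M N j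
    simp only [linMap, map_sum]
    have h1 : ∀ k, bind₁ (fun i => ∑ l, M i l • (X l : MvPolynomial (Fin n) K))
        (N j k • X k) = N j k • ∑ l, M k l • (X l : MvPolynomial (Fin n) K) := by
      intro k
      rw [map_smul, bind₁_X_right]
    calc (∑ k, bind₁ (fun i => ∑ l, M i l • (X l : MvPolynomial (Fin n) K))
          (N j k • X k))
        = ∑ k, N j k • ∑ l, M k l • (X l : MvPolynomial (Fin n) K) := by
          exact Finset.sum_congr rfl fun k _ => h1 k
      _ = ∑ k, ∑ l, (N j k * M k l) • (X l : MvPolynomial (Fin n) K) := by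
          refine Finset.sum_congr rfl fun k _ => ?_
          rw [Finset.smul_sum]
          exact Finset.sum_congr rfl fun l _ => (smul_smul _ _ _)
      _ = ∑ l, ∑ k, (N j k * M k l) • (X l : MvPolynomial (Fin n) K) :=
          Finset.sum_comm
      _ = ∑ l, (N * M) j l • (X l : MvPolynomial (Fin n) K) := by
          refine Finset.sum_congr rfl fun l _ => ?_
          rw [← Finset.sum_smul]
          rfl
  have linMap_one : ∀ j, linMap (1 : Matrix (Fin n) (Fin n) K) j
      = (X j : MvPolynomial (Fin n) K) := by
    intro j
    simp only [linMap, Matrix.one_apply]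
    rw [Finset.sum_eq_single j]
    · simp
    · intro k _ hk
      simp [Ne.symm hk]
    · intro h
      exact absurd (Finset.mem_univ j) h
  have hAB' : ∀ j, bind₁ (linMap B) (linMap A j) = (X j : MvPolynomial (Fin n) K) := by
    intro j; rw [bind_lin, hAB, linMap_one]
  have hBA' : ∀ j, bind₁ (linMap A) (linMap B j) = (X j : MvPolynomial (Fin n) K) := by
    intro j; rw [bind_lin, hBA, linMap_one]
  have hinv : ∀ q : MvPolynomial (Fin n) K, bind₁ (linMap B) (bind₁ (linMap A) q) = q := by
    intro q
    rw [bind₁_bind₁]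
    have h : (fun j => bind₁ (linMap B) (linMap A j))
        = (X : Fin n → MvPolynomial (Fin n) K) := funext hAB'
    rw [h, bind₁_X_left]
    rfl
  have hGbind : ∀ q : MvPolynomial (Fin n) K,
      bind₁ G q = bind₁ (linMap A) (bind₁ F (bind₁ (linMap B) q)) := by
    have hGeq : G = fun j => bind₁ (fun i => bind₁ (linMap A) (F i)) (linMap B j) := by
      rw [hG]
      funext j
      simp only [polyComp]
      rfl
    intro q
    rw [bind₁_bind₁, bind₁_bind₁, hGeq]
  have hconj : ∀ (k : ℕ) (i : Fin n),
      seqP G k i = bind₁ (linMap A) ((del F)^[k] (linMap B i)) := by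
    intro k
    induction k with
    | zero =>
      intro i
      show (X i : MvPolynomial (Fin n) K) = _
      rw [Function.iterate_zero_apply]
      exact (hBA' i).symm
    | succ k ih =>
      intro i
      show bind₁ G (seqP G k i) - seqP G k i = _
      rw [ih i, hGbind, hinv, Function.iterate_succ_apply']
      rw [show del F ((del F)^[k] (linMap B i))
        = bind₁ F ((del F)^[k] (linMap B i)) - (del F)^[k] (linMap B i) from rfl]
      rw [map_sub]
  -- weight bound for the linear part
  have hq : ∀ i : Fin n, wle w (linMap B i) (E ^ (n - 1)) := by
    intro i m hm
    obtain ⟨k, _, hm'⟩ := Finset.mem_biUnion.mp (MvPolynomial.support_sum hm)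
    have hk : m ∈ ((X k : MvPolynomial (Fin n) K)).support :=
      MvPolynomial.support_smul hm'
    rw [MvPolynomial.support_X, Finset.mem_singleton] at hk
    subst hk
    rw [wt_single, one_mul, hw]
    exact Nat.pow_le_pow_right hE (Nat.sub_le _ _)
  refine ⟨E ^ (n - 1) + 1, fun i => ?_⟩
  rw [hconj _ i, del_iter hF _ _ (hq i), map_zero]
end

section
/- The Nagata automorphism F of K^3 defined by F_1 = X_1 - 2pX_2 - p^2 X_3, F_2 = X_2 + pX_3, F_3 = X_3, where p = X_1 X_3 + X_2^2, is nice; more precisely P_3^1 = 0 and P_2^2 = 0 for the associated sequences. -/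
open MvPolynomial Finset

/-- The quadratic form `p = X₁X₃ + X₂²` of the Nagata automorphism. -/
noncomputable def nagataP (K : Type*) [Field K] : MvPolynomial (Fin 3) K :=
  X 0 * X 2 + X 1 ^ 2

/-- The Nagata automorphism `(X₁ - 2pX₂ - p²X₃, X₂ + pX₃, X₃)`. -/
noncomputable def nagata (K : Type*) [Field K] : Fin 3 → MvPolynomial (Fin 3) K :=
  ![X 0 - 2 * nagataP K * X 1 - nagataP K ^ 2 * X 2,
    X 1 + nagataP K * X 2,
    X 2]


section Aux
variable {K : Type*} [Field K]

lemma bind_nagataP : bind₁ (nagata K) (nagataP K) = nagataP K := by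
  simp only [nagataP, nagata, map_add, map_mul, map_pow, bind₁_X_right,
    Matrix.cons_val_zero, Matrix.cons_val_one, Matrix.head_cons,
    Matrix.cons_val_two, Matrix.tail_cons]
  ring

lemma seq1_0 : seqP (nagata K) 1 0 = -(2 * nagataP K * X 1) - nagataP K ^ 2 * X 2 := by
  simp only [seqP, nagata, bind₁_X_right, Matrix.cons_val_zero]
  ring

lemma seq1_1 : seqP (nagata K) 1 1 = nagataP K * X 2 := by
  simp only [seqP, nagata, bind₁_X_right, Matrix.cons_val_one, Matrix.head_cons, Matrix.cons_val_zero]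
  ring

lemma seq1_2 : seqP (nagata K) 1 2 = 0 := by
  simp only [seqP, nagata, bind₁_X_right, Matrix.cons_val_two, Matrix.tail_cons,
    Matrix.head_cons, sub_self]

lemma seq2_0 : seqP (nagata K) 2 0 = -(2 * nagataP K ^ 2 * X 2) := by
  show bind₁ (nagata K) (seqP (nagata K) 1 0) - seqP (nagata K) 1 0 = _
  rw [seq1_0]
  simp only [map_sub, map_neg, map_mul, map_pow, map_ofNat, bind₁_X_right, bind_nagataP]
  simp only [nagata, Matrix.cons_val_one, Matrix.head_cons, Matrix.cons_val_two, Matrix.tail_cons, Matrix.cons_val_zero]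
  ring

lemma seq2_1 : seqP (nagata K) 2 1 = 0 := by
  show bind₁ (nagata K) (seqP (nagata K) 1 1) - seqP (nagata K) 1 1 = 0
  rw [seq1_1]
  simp only [map_mul, bind_nagataP, bind₁_X_right]
  simp only [nagata, Matrix.cons_val_two, Matrix.tail_cons, Matrix.head_cons, sub_self]

lemma seq2_2 : seqP (nagata K) 2 2 = 0 := by
  show bind₁ (nagata K) (seqP (nagata K) 1 2) - seqP (nagata K) 1 2 = 0
  rw [seq1_2]; simp

lemma seq3_0 : seqP (nagata K) 3 0 = 0 := by
  show bind₁ (nagata K) (seqP (nagata K) 2 0) - seqP (nagata K) 2 0 = 0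
  rw [seq2_0]
  simp only [map_neg, map_mul, map_pow, map_ofNat, bind_nagataP, bind₁_X_right]
  simp only [nagata, Matrix.cons_val_two, Matrix.tail_cons, Matrix.head_cons, sub_self]

lemma seq3_any (i : Fin 3) : seqP (nagata K) 3 i = 0 := by
  fin_cases i
  · exact seq3_0
  · show bind₁ (nagata K) (seqP (nagata K) 2 1) - seqP (nagata K) 2 1 = 0
    rw [seq2_1]; simp
  · show bind₁ (nagata K) (seqP (nagata K) 2 2) - seqP (nagata K) 2 2 = 0
    rw [seq2_2]; simp

end Aux

/-- The Nagata automorphism is nice: `P_3^1 = 0`, `P_2^2 = 0`. -/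
theorem stmt5 {K : Type*} [Field K] [CharZero K] :
    seqP (nagata K) 3 0 = 0 ∧ seqP (nagata K) 2 1 = 0 ∧
      ∃ m, ∀ i, seqP (nagata K) m i = 0 := by
  exact ⟨seq3_0, seq2_1, 3, seq3_any⟩
end

section
/- If F is a nice polynomial automorphism of K^n, then its inverse G = F^{-1} is nice. Specifically, if P_m^i = 0 for the sequence associated to F, then the sequence Q_k^i associated to G satisfies Q_k^i(Y) = Σ_{l=k}^{m-1} (-1)^l P_l^i(G^{k-1}(Y)) and hence Q_m^i = 0. -/
open MvPolynomial Finset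

/-- `compN G k` is the `k`-fold composition `G^k` of `G` with itself
(`compN G 0 = Id`). -/
noncomputable def compN {K : Type*} [Field K] {n : ℕ}
    (G : Fin n → MvPolynomial (Fin n) K) : ℕ → Fin n → MvPolynomial (Fin n) K
  | 0 => fun i => X i
  | k + 1 => fun i => bind₁ (compN G k) (G i)

section aux
variable {K : Type*} [Field K] {n : ℕ} (F G : Fin n → MvPolynomial (Fin n) K)

lemma bind₁_comp_id (hGF : ∀ i, bind₁ G (F i) = X i) (p : MvPolynomial (Fin n) K) :
    bind₁ G (bind₁ F p) = p := by
  rw [bind₁_bind₁]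
  simp [hGF]

lemma seqP_step (hGF : ∀ i, bind₁ G (F i) = X i) (l : ℕ) (i : Fin n) :
    bind₁ G (seqP F l i) = seqP F l i - bind₁ G (seqP F (l + 1) i) := by
  have h : seqP F (l + 1) i = bind₁ F (seqP F l i) - seqP F l i := rfl
  rw [h, map_sub, bind₁_comp_id F G hGF]
  ring

lemma compN_succ' (k : ℕ) : ∀ i : Fin n, compN G (k + 1) i = bind₁ G (compN G k i) := by
  induction k with
  | zero => intro i; simp [compN]
  | succ k ih =>
    intro i
    show bind₁ (compN G (k + 1)) (G i) = bind₁ G (compN G (k + 1) i)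
    conv_lhs => rw [funext ih]
    rw [← bind₁_bind₁]
    rfl

lemma bind₁_compN_G (k : ℕ) (p : MvPolynomial (Fin n) K) :
    bind₁ (compN G k) (bind₁ G p) = bind₁ (compN G (k + 1)) p := by
  rw [bind₁_bind₁]; rfl

lemma bind₁_G_compN (k : ℕ) (p : MvPolynomial (Fin n) K) :
    bind₁ G (bind₁ (compN G k) p) = bind₁ (compN G (k + 1)) p := by
  rw [bind₁_bind₁]
  conv_rhs => rw [funext (compN_succ' G k)]

lemma telescope (hGF : ∀ i, bind₁ G (F i) = X i) (t : ℕ) : ∀ i : Fin n, G i =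
      (∑ l ∈ range t, (-1 : K) ^ l • seqP F l i) + (-1 : K) ^ t • bind₁ G (seqP F t i) := by
  induction t with
  | zero => intro i; simp [seqP]
  | succ t ih =>
    intro i
    rw [ih i, seqP_step F G hGF t i, Finset.sum_range_succ]
    module

lemma keyLemma (hGF : ∀ i, bind₁ G (F i) = X i)
    (m : ℕ) (hm : ∀ i, seqP F m i = 0) (k : ℕ) :
    ∀ i : Fin n, seqP G (k + 1) i =
      ∑ l ∈ Finset.Ico (k + 1) m, (-1 : K) ^ l • bind₁ (compN G k) (seqP F l i) := by
  induction k with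
  | zero =>
    intro i
    rcases Nat.eq_zero_or_pos m with rfl | hm1
    · exact absurd (hm i) (by simpa [seqP] using X_ne_zero (R := K) i)
    · have h0 : seqP G 1 i = G i - X i := by
        show bind₁ G (X i) - X i = G i - X i
        rw [bind₁_X_right]
      have hcomp : ∀ p : MvPolynomial (Fin n) K, bind₁ (compN G 0) p = p := by
        intro p
        show bind₁ (fun j => X j) p = p
        simp [bind₁_X_left]
      rw [h0, telescope F G hGF m i, hm i, map_zero, smul_zero, add_zero,
        ← Nat.Ico_zero_eq_range, Finset.sum_eq_sum_Ico_succ_bot hm1]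
      simp only [pow_zero, one_smul, hcomp]
      have : seqP F 0 i = X i := rfl
      rw [this]
      ring
  | succ k ih =>
    intro i
    have hQ : seqP G (k + 2) i = bind₁ G (seqP G (k + 1) i) - seqP G (k + 1) i := rfl
    rw [hQ, ih i, map_sum]
    have h1 : ∀ l, bind₁ G ((-1 : K) ^ l • bind₁ (compN G k) (seqP F l i))
        = (-1 : K) ^ l • bind₁ (compN G (k + 1)) (seqP F l i) := by
      intro l
      rw [map_smul, bind₁_G_compN]
    simp only [h1]
    rw [← Finset.sum_sub_distrib]
    have h2 : ∀ l, (-1 : K) ^ l • bind₁ (compN G (k + 1)) (seqP F l i)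
        - (-1 : K) ^ l • bind₁ (compN G k) (seqP F l i)
        = (-1 : K) ^ (l + 1) • bind₁ (compN G (k + 1)) (seqP F (l + 1) i) := by
      intro l
      have hs := seqP_step F G hGF l i
      -- bind₁ G (P_l) = P_l - bind₁ G (P_{l+1})
      have := congrArg (bind₁ (compN G k)) hs
      rw [map_sub, bind₁_compN_G, bind₁_compN_G] at this
      -- this : bind₁ (compN G (k+1)) (P_l) = bind₁ (compN G k) (P_l) - bind₁ (compN G (k+1)) (P_{l+1})
      rw [this]
      module
    simp only [h2]
    have h3 : ∑ l ∈ Finset.Ico (k + 1) m,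
        (-1 : K) ^ (l + 1) • bind₁ (compN G (k + 1)) (seqP F (l + 1) i)
        = ∑ l ∈ Finset.Ico (k + 2) (m + 1),
        (-1 : K) ^ l • bind₁ (compN G (k + 1)) (seqP F l i) := by
      rw [Finset.sum_Ico_eq_sum_range, Finset.sum_Ico_eq_sum_range]
      have hlen : m + 1 - (k + 2) = m - (k + 1) := by omega
      rw [hlen]
      apply Finset.sum_congr rfl
      intro x _
      rw [show k + 1 + x + 1 = k + 2 + x by omega]
    rw [h3]
    rcases le_or_gt (k + 2) m with h | h
    · rw [Finset.sum_Ico_succ_top h, hm i, map_zero, smul_zero, add_zero]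
    · rw [Finset.Ico_eq_empty (by omega), Finset.Ico_eq_empty (by omega)]

end aux

/-- If `F` is a nice polynomial automorphism with inverse `G`, then `G` is nice:
if `P_m^i = 0` then `Q_k^i(Y) = ∑_{l=k}^{m-1} (-1)^l P_l^i(G^{k-1}(Y))` for
`k ≥ 1`, and in particular `Q_m^i = 0`. -/
theorem stmt7 {K : Type*} [Field K] [CharZero K] {n : ℕ}
    (F G : Fin n → MvPolynomial (Fin n) K)
    (hFG : ∀ i, bind₁ F (G i) = X i)
    (hGF : ∀ i, bind₁ G (F i) = X i)
    (m : ℕ) (hm : ∀ i, seqP F m i = 0) :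
    (∀ k, 1 ≤ k → ∀ i,
      seqP G k i = ∑ l ∈ Finset.Ico k m, (-1 : K) ^ l • bind₁ (compN G (k - 1)) (seqP F l i)) ∧
    ∀ i, seqP G m i = 0 := by
  constructor
  · intro k hk i
    obtain ⟨j, rfl⟩ : ∃ j, k = j + 1 := ⟨k - 1, by omega⟩
    simpa using keyLemma F G hGF m hm j i
  · intro i
    rcases Nat.eq_zero_or_pos m with rfl | hm1
    · simp only [seqP] at hm; exact hm i
    · obtain ⟨j, rfl⟩ : ∃ j, m = j + 1 := ⟨m - 1, by omega⟩
      rw [keyLemma F G hGF (j+1) hm j i]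
      simp
end

section
/- The polynomial automorphisms F_1(X_1,X_2) = (X_1 + X_2^3, X_2) and F_2(X_1,X_2) = (X_1, X_2 + X_1^2) of K^2 are both nice, but their composition F = F_1 ∘ F_2 = (X_1 + (X_1^2 + X_2)^3, X_2 + X_1^2) is not nice: P_k^1 ≠ 0 for all k. Hence the set of nice polynomial automorphisms is not closed under composition. -/
open MvPolynomial Finset

/-- The orbit of the point `(2,0)` under the map `(x,y) ↦ (x+(x²+y)³, y+x²)`. -/
private def ab : ℕ → ℕ × ℕ
  | 0 => (2, 0)
  | n + 1 => ((ab n).1 + ((ab n).1 ^ 2 + (ab n).2) ^ 3, (ab n).2 + (ab n).1 ^ 2)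

/-- Iterated finite differences of the first-coordinate sequence. -/
private def SS : ℕ → ℕ → ℤ
  | 0 => fun j => ((ab j).1 : ℤ)
  | k + 1 => fun j => SS k (j + 1) - SS k j

private lemma aa_ge (m : ℕ) : m + 2 ≤ (ab m).1 := by
  induction m with
  | zero => simp [ab]
  | succ n ih =>
    have h1 : (ab n).1 ^ 2 ≤ ((ab n).1 ^ 2 + (ab n).2) ^ 3 := by
      calc (ab n).1 ^ 2 ≤ (ab n).1 ^ 2 + (ab n).2 := Nat.le_add_right _ _
        _ ≤ ((ab n).1 ^ 2 + (ab n).2) ^ 3 := Nat.le_self_pow (by norm_num) _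
    have h2 : 2 ≤ (ab n).1 := le_trans (by omega) ih
    have : (ab n).1 + 1 ≤ (ab n).1 ^ 2 := by nlinarith
    show n + 1 + 2 ≤ (ab n).1 + ((ab n).1 ^ 2 + (ab n).2) ^ 3
    omega

private lemma aa_sq (j : ℕ) : (ab j).1 ^ 2 ≤ (ab (j + 1)).1 := by
  have h1 : (ab j).1 ^ 2 ≤ ((ab j).1 ^ 2 + (ab j).2) ^ 3 := by
    calc (ab j).1 ^ 2 ≤ (ab j).1 ^ 2 + (ab j).2 := Nat.le_add_right _ _
      _ ≤ ((ab j).1 ^ 2 + (ab j).2) ^ 3 := Nat.le_self_pow (by norm_num) _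
  show (ab j).1 ^ 2 ≤ (ab j).1 + ((ab j).1 ^ 2 + (ab j).2) ^ 3
  omega

/-- The key invariant: every iterated finite difference of the first-coordinate
orbit sequence is positive, and in fact grows rapidly in `j`. -/
private lemma SS_inv (k : ℕ) : ∀ j, 0 < SS k j ∧
    (((ab (j + k)).1 : ℤ) - k) * SS k j ≤ SS k (j + 1) := by
  induction k with
  | zero =>
    intro j
    have h1 : 0 < (ab j).1 := lt_of_lt_of_le (by norm_num) (aa_ge j)
    have h2 := aa_sq j
    constructor
    · show (0:ℤ) < ((ab j).1 : ℤ)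
      exact_mod_cast h1
    · show (((ab j).1 : ℤ) - 0) * ((ab j).1 : ℤ) ≤ ((ab (j+1)).1 : ℤ)
      have : ((ab j).1 ^ 2 : ℤ) ≤ ((ab (j+1)).1 : ℤ) := by exact_mod_cast h2
      nlinarith
  | succ k ih =>
    intro j
    obtain ⟨hpos, hrat⟩ := ih j
    obtain ⟨hpos1, hrat1⟩ := ih (j + 1)
    have hge : (k : ℤ) + 2 ≤ ((ab (j + k)).1 : ℤ) := by
      exact_mod_cast le_trans (by omega) (aa_ge (j + k))
    have hge1 : (k : ℤ) + 2 ≤ ((ab (j + 1 + k)).1 : ℤ) := by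
      exact_mod_cast le_trans (by omega) (aa_ge (j + 1 + k))
    have hSj1 : SS k j ≤ SS k (j + 1) := by nlinarith
    constructor
    · show 0 < SS k (j + 1) - SS k j
      nlinarith
    · show (((ab (j + (k+1))).1 : ℤ) - (k+1)) * (SS k (j+1) - SS k j) ≤
        SS k (j + 1 + 1) - SS k (j + 1)
      have e : j + (k + 1) = j + 1 + k := by omega
      rw [e]
      nlinarith

/-- Evaluating `P_k^1` for the composed map at the orbit point `ab j`
gives the `k`-th finite difference `SS k j`. -/
private lemma eval_seqP {K : Type*} [Field K] (k : ℕ) : ∀ j : ℕ,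
    aeval (![((ab j).1 : K), ((ab j).2 : K)])
      (seqP (![X 0 + (X 0 ^ 2 + X 1) ^ 3, X 1 + X 0 ^ 2] : Fin 2 → MvPolynomial (Fin 2) K) k 0)
      = ((SS k j : ℤ) : K) := by
  induction k with
  | zero => intro j; simp [seqP, SS]
  | succ k ih =>
    intro j
    show aeval _ (bind₁ _ (seqP _ k 0) - seqP _ k 0) = _
    rw [map_sub, aeval_bind₁]
    have hv : (fun l => aeval (![((ab j).1 : K), ((ab j).2 : K)])
        ((![X 0 + (X 0 ^ 2 + X 1) ^ 3, X 1 + X 0 ^ 2] : Fin 2 → MvPolynomial (Fin 2) K) l)) =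
        ![((ab (j+1)).1 : K), ((ab (j+1)).2 : K)] := by
      funext l
      fin_cases l <;> simp [ab]
    rw [hv, ih (j + 1), ih j]
    show _ = ((SS k (j+1) - SS k j : ℤ) : K)
    push_cast
    ring

/-- `F₁ = (X₁ + X₂³, X₂)` and `F₂ = (X₁, X₂ + X₁²)` are nice, but their
composition `F = F₁ ∘ F₂ = (X₁ + (X₁² + X₂)³, X₂ + X₁²)` is not nice:
`P_k^1 ≠ 0` for all `k`. Hence nice automorphisms are not closed under
composition. -/
theorem stmt9 {K : Type*} [Field K] [CharZero K] :
    (∃ m, ∀ i, seqP (![X 0 + X 1 ^ 3, X 1] : Fin 2 → MvPolynomial (Fin 2) K) m i = 0) ∧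
    (∃ m, ∀ i, seqP (![X 0, X 1 + X 0 ^ 2] : Fin 2 → MvPolynomial (Fin 2) K) m i = 0) ∧
    (polyComp (![X 0 + X 1 ^ 3, X 1] : Fin 2 → MvPolynomial (Fin 2) K)
        ![X 0, X 1 + X 0 ^ 2] =
      ![X 0 + (X 0 ^ 2 + X 1) ^ 3, X 1 + X 0 ^ 2]) ∧
    (∀ k, seqP (![X 0 + (X 0 ^ 2 + X 1) ^ 3, X 1 + X 0 ^ 2] :
        Fin 2 → MvPolynomial (Fin 2) K) k 0 ≠ 0) ∧
    ¬ ∃ m, ∀ i, seqP (![X 0 + (X 0 ^ 2 + X 1) ^ 3, X 1 + X 0 ^ 2] :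
        Fin 2 → MvPolynomial (Fin 2) K) m i = 0 := by
  have hkey : ∀ k, seqP (![X 0 + (X 0 ^ 2 + X 1) ^ 3, X 1 + X 0 ^ 2] :
      Fin 2 → MvPolynomial (Fin 2) K) k 0 ≠ 0 := by
    intro k h
    have h0 := eval_seqP (K := K) k 0
    rw [h] at h0
    simp only [map_zero] at h0
    have : (SS k 0 : K) ≠ 0 := by
      have := (SS_inv k 0).1
      exact_mod_cast this.ne'
    exact this h0.symm
  refine ⟨⟨2, ?_⟩, ⟨2, ?_⟩, ?_, hkey, ?_⟩
  · rw [Fin.forall_fin_two]; simp [seqP]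
  · rw [Fin.forall_fin_two]; simp [seqP]
  · funext i
    fin_cases i <;> simp [polyComp] <;> ring
  · rintro ⟨m, hm⟩
    exact hkey m (hm 0)
end

section
/- Let H: K^n → K^n be homogeneous with each H_i a polynomial, and suppose the Jacobian matrix JH satisfies (JH)·H = 0, i.e. Σ_j (∂H_i/∂X_j) H_j = 0 for all i. Then for all k ≥ 1 and all i, Σ_{j_1,...,j_k} (∂^k H_i / ∂X_{j_1}···∂X_{j_k}) H_{j_1}···H_{j_k} = 0. -/
open MvPolynomial Finset

private lemma stmt13_mul {K : Type*} [Field K] {n : ℕ}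
    (H : Fin n → MvPolynomial (Fin n) K)
    {P Q : MvPolynomial (Fin n) K}
    (hP : ∑ l, pderiv l P * H l = 0) (hQ : ∑ l, pderiv l Q * H l = 0) :
    ∑ l, pderiv l (P * Q) * H l = 0 := by
  have h : ∑ l, pderiv l (P * Q) * H l
      = Q * (∑ l, pderiv l P * H l) + P * (∑ l, pderiv l Q * H l) := by
    rw [Finset.mul_sum, Finset.mul_sum, ← Finset.sum_add_distrib]
    refine Finset.sum_congr rfl fun l _ => ?_
    rw [pderiv_mul]; ring
  rw [h, hP, hQ]; ring

/-- If `H = (H_1,…,H_n)` is homogeneous and `∑_j (∂H_i/∂X_j)·H_j = 0` for all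
`i`, then for all `k ≥ 1` and all `i`,
`∑_{j_1,…,j_k} (∂^k H_i/∂X_{j_1}…∂X_{j_k})·H_{j_1}…H_{j_k} = 0`. -/
theorem stmt13 {K : Type*} [Field K] [CharZero K] {n : ℕ}
    (H : Fin n → MvPolynomial (Fin n) K) (d : ℕ)
    (hhom : ∀ i, (H i).IsHomogeneous d)
    (hJH : ∀ i, ∑ j, pderiv j (H i) * H j = 0) :
    ∀ k, 1 ≤ k → ∀ i,
      ∑ j : Fin k → Fin n,
        (List.ofFn j).foldl (fun p a => pderiv a p) (H i) * ∏ t, H (j t) = 0 := by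
  intro k hk
  induction k with
  | zero => omega
  | succ k ih =>
    intro i
    rcases Nat.eq_zero_or_pos k with hk0 | hk1
    · subst hk0
      rw [← hJH i]
      apply Fintype.sum_equiv (Equiv.funUnique (Fin 1) (Fin n))
      intro j
      simp [List.ofFn_succ]
    · have ih' := ih hk1
      have key : ∀ m (g : Fin m → Fin n),
          ∑ l, pderiv l (∏ t, H (g t)) * H l = 0 := by
        intro m g
        refine Finset.prod_induction _ (fun x => ∑ l, pderiv l x * H l = 0)
          (fun a b ha hb => stmt13_mul H ha hb) (by simp) (fun t _ => hJH (g t))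
      set F : (Fin k → Fin n) → MvPolynomial (Fin n) K :=
        fun j => (List.ofFn j).foldl (fun p a => pderiv a p) (H i) with hF
      have h0 : ∑ l, pderiv l (∑ j : Fin k → Fin n, F j * ∏ t, H (j t)) * H l = 0 := by
        rw [ih' i]; simp
      have hj : ∀ j : Fin k → Fin n,
          ∑ l, pderiv l (F j) * ((∏ t, H (j t)) * H l)
            = ∑ l, pderiv l (F j * ∏ t, H (j t)) * H l := by
        intro j
        have e1 : ∀ l : Fin n, pderiv l (F j * ∏ t, H (j t)) * H l
            = pderiv l (F j) * ((∏ t, H (j t)) * H l)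
              + F j * (pderiv l (∏ t, H (j t)) * H l) := fun l => by
          rw [pderiv_mul]; ring
        simp only [e1]
        rw [Finset.sum_add_distrib, ← Finset.mul_sum, key k j, mul_zero, add_zero]
      have h1 : ∑ j : Fin k → Fin n,
          ∑ l, pderiv l (F j) * ((∏ t, H (j t)) * H l) = 0 := by
        calc ∑ j : Fin k → Fin n, ∑ l, pderiv l (F j) * ((∏ t, H (j t)) * H l)
            = ∑ j : Fin k → Fin n, ∑ l, pderiv l (F j * ∏ t, H (j t)) * H l :=
              Finset.sum_congr rfl fun j _ => hj j
          _ = ∑ l, ∑ j : Fin k → Fin n, pderiv l (F j * ∏ t, H (j t)) * H l :=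
              Finset.sum_comm
          _ = ∑ l, pderiv l (∑ j : Fin k → Fin n, F j * ∏ t, H (j t)) * H l := by
              refine Finset.sum_congr rfl fun l _ => ?_
              rw [map_sum, Finset.sum_mul]
          _ = 0 := h0
      rw [← h1]
      rw [← Equiv.sum_comp (Fin.snocEquiv (fun _ => Fin n))
        (fun j : Fin (k+1) → Fin n =>
          (List.ofFn j).foldl (fun p a => pderiv a p) (H i) * ∏ t, H (j t))]
      rw [Fintype.sum_prod_type, Finset.sum_comm]
      refine Finset.sum_congr rfl fun j _ => Finset.sum_congr rfl fun l _ => ?_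
      have hsnoc : ((Fin.snocEquiv fun _ => Fin n) (l, j)) = Fin.snoc j l :=
        funext fun t => rfl
      rw [hsnoc]
      rw [List.ofFn_succ', Fin.prod_univ_castSucc]
      simp [List.concat_eq_append, List.foldl_append, hF, Fin.snoc_castSucc, Fin.snoc_last]
end

section
/- Let F = Id + H: K^n → K^n where H_i = L_i^3 with L_i = Σ_j a_{ij} X_j linear forms. If (JH)^2 = 0 then F is nice (P_2^i = 0 for all i) and F^{-1} = X - H. -/
open MvPolynomial Finset

/-- Let `F = Id + H` with `H_i = L_i³`, `L_i = ∑_j a_{ij}X_j`. If `(JH)² = 0`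
then `F` is nice (`P_2^i = 0` for all `i`) and `F⁻¹ = X - H`. -/
theorem stmt14 {K : Type*} [Field K] [CharZero K] {n : ℕ}
    (a : Matrix (Fin n) (Fin n) K)
    (L : Fin n → MvPolynomial (Fin n) K)
    (hL : ∀ i, L i = ∑ j, C (a i j) * X j)
    (H F : Fin n → MvPolynomial (Fin n) K)
    (hH : ∀ i, H i = L i ^ 3)
    (hF : ∀ i, F i = X i + H i)
    (hJ : (Matrix.of fun i j => pderiv j (H i)) *
          (Matrix.of fun i j => pderiv j (H i)) = 0) :
    (∀ i, seqP F 2 i = 0) ∧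
    (∀ i, bind₁ F (X i - H i) = X i) ∧
    (∀ i, bind₁ (fun j => X j - H j) (F i) = X i) := by
  -- derivative of L
  have hLd : ∀ i j, pderiv j (L i) = C (a i j) := by
    intro i j
    rw [hL]
    rw [map_sum]
    rw [Finset.sum_eq_single j]
    · simp
    · intro b _ hb
      simp [pderiv_C_mul, pderiv_X, hb]
    · simp
  -- derivative of H
  have hpd : ∀ i j, pderiv j (H i) = 3 * L i ^ 2 * C (a i j) := by
    intro i j
    rw [hH, pderiv_pow, hLd]
    push_cast
    ring
  -- entries of (JH)^2 vanish
  have h0 : ∀ i k, (∑ j, pderiv j (H i) * pderiv k (H j)) = 0 := by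
    intro i k
    have := congrFun (congrFun hJ i) k
    simpa [Matrix.mul_apply] using this
  -- key identity
  have hkey : ∀ i, L i ^ 2 * (∑ j, C (a i j) * H j) = 0 := by
    intro i
    have e1 : (∑ k, (∑ j, pderiv j (H i) * pderiv k (H j)) * X k)
        = (0 : MvPolynomial (Fin n) K) := by
      simp [h0]
    have inner : ∀ j : Fin n, C (a i j) * H j
        = ∑ k, C (a i j) * L j ^ 2 * (C (a j k) * X k) := by
      intro j
      rw [← Finset.mul_sum, ← hL, hH]
      ring
    have e2 : (∑ k, (∑ j, pderiv j (H i) * pderiv k (H j)) * X k)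
        = 9 * (L i ^ 2 * ∑ j, C (a i j) * H j) := by
      simp only [hpd, Finset.sum_mul]
      rw [Finset.sum_comm, Finset.mul_sum, Finset.mul_sum]
      refine Finset.sum_congr rfl fun j _ => ?_
      rw [inner, Finset.mul_sum, Finset.mul_sum]
      refine Finset.sum_congr rfl fun k _ => ?_
      ring
    have e3 : (9 : MvPolynomial (Fin n) K) * (L i ^ 2 * ∑ j, C (a i j) * H j) = 0 := by
      rw [← e2, e1]
    have h9 : (9 : MvPolynomial (Fin n) K) ≠ 0 := by
      norm_num
    exact (mul_eq_zero.mp e3).resolve_left h9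
  have hM : ∀ i, L i = 0 ∨ (∑ j, C (a i j) * H j) = 0 := by
    intro i
    rcases mul_eq_zero.mp (hkey i) with h | h
    · exact Or.inl (by simpa using pow_eq_zero_iff (two_ne_zero) |>.mp h)
    · exact Or.inr h
  -- bind₁ F fixes H
  have hFH : ∀ i, bind₁ F (H i) = H i := by
    intro i
    rcases hM i with h | h
    · rw [hH, h]
      simp [hH, h]
    · rw [hH, map_pow]
      have : bind₁ F (L i) = L i := by
        nth_rewrite 1 [hL]
        rw [map_sum]
        simp only [map_mul, bind₁_X_right, algHom_C]
        calc (∑ j, C (a i j) * F j) = (∑ j, C (a i j) * X j) + ∑ j, C (a i j) * H j := by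
              rw [← Finset.sum_add_distrib]
              refine Finset.sum_congr rfl fun j _ => ?_
              rw [hF]; ring
          _ = L i := by rw [h, add_zero]; exact (hL i).symm -- keep
      rw [this, ← hH]
  -- bind₁ G fixes H, where G = X - H
  have hGH : ∀ i, bind₁ (fun j => X j - H j) (H i) = H i := by
    intro i
    rcases hM i with h | h
    · rw [hH, h]
      simp [hH, h]
    · rw [hH, map_pow]
      have : bind₁ (fun j => X j - H j) (L i) = L i := by
        nth_rewrite 1 [hL]
        rw [map_sum]
        simp only [map_mul, bind₁_X_right, algHom_C]
        calc (∑ j, C (a i j) * (X j - H j))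
            = (∑ j, C (a i j) * X j) - ∑ j, C (a i j) * H j := by
              rw [← Finset.sum_sub_distrib]
              refine Finset.sum_congr rfl fun j _ => ?_
              ring
          _ = L i := by rw [h, sub_zero]; exact (hL i).symm -- keep
      rw [this, ← hH]
  refine ⟨?_, ?_, ?_⟩
  · intro i
    have h1 : seqP F 1 i = H i := by
      simp [seqP, hF i]
    have h2 : seqP F 2 i = bind₁ F (seqP F 1 i) - seqP F 1 i := rfl
    rw [h2, h1, hFH, sub_self]
  · intro i
    rw [map_sub, bind₁_X_right, hFH, hF]
    ring
  · intro i
    rw [hF, map_add, bind₁_X_right, hGH]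
    ring
end

section
/- Let F = Id + H: K^n → K^n where H_i = L_i^3 with L_i = Σ_j a_{ij}X_j. If (JH)^3 = 0, then F is nice with P_5^i = 0 for all i, and the inverse F^{-1} has degree at most 9. Explicitly, P_4^i = 6 Σ_{j,k,l} a_{ij}a_{ik}a_{il} L_j^3 L_k^3 L_l^3 and P_5^i = 0. -/
open MvPolynomial Finset

private theorem quartic_expand {R : Type*} [CommRing R] (u v w z : R) :
    (Polynomial.C u + Polynomial.X * Polynomial.C v)^2 *
      (Polynomial.C w + Polynomial.X * Polynomial.C z)^2 =
      Polynomial.C (u^2*w^2) + Polynomial.C (2*u*v*w^2+2*u^2*w*z) * Polynomial.X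
        + Polynomial.C (v^2*w^2+4*(u*v*w*z)+u^2*z^2) * Polynomial.X^2
        + Polynomial.C (2*u*v*z^2+2*v^2*w*z) * Polynomial.X^3
        + Polynomial.C (v^2*z^2) * Polynomial.X^4 := by
  simp only [map_mul, map_add, map_pow, map_ofNat]; ring

private theorem quartic_coeff1 {R : Type*} [CommRing R] (u v w z : R) :
    ((Polynomial.C u + Polynomial.X * Polynomial.C v)^2 *
      (Polynomial.C w + Polynomial.X * Polynomial.C z)^2).coeff 1
      = 2*u*v*w^2 + 2*u^2*w*z := by
  rw [quartic_expand]
  simp only [Polynomial.coeff_add, Polynomial.coeff_C_mul, Polynomial.coeff_X_pow,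
    Polynomial.coeff_C, Polynomial.coeff_X_one, Polynomial.coeff_X]
  norm_num

private theorem quartic_coeff2 {R : Type*} [CommRing R] (u v w z : R) :
    ((Polynomial.C u + Polynomial.X * Polynomial.C v)^2 *
      (Polynomial.C w + Polynomial.X * Polynomial.C z)^2).coeff 2
      = v^2*w^2 + 4*(u*v*w*z) + u^2*z^2 := by
  rw [quartic_expand]
  simp only [Polynomial.coeff_add, Polynomial.coeff_C_mul, Polynomial.coeff_X_pow,
    Polynomial.coeff_C, Polynomial.coeff_X_one, Polynomial.coeff_X]
  norm_num

set_option maxHeartbeats 2000000 in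
/-- Let `F = Id + H` with `H_i = L_i³`, `L_i = ∑_j a_{ij}X_j`. If `(JH)³ = 0`
then `F` is nice with `P_5^i = 0` for all `i`,
`P_4^i = 6·∑_{j,k,l} a_{ij}a_{ik}a_{il} L_j³L_k³L_l³`, and `F⁻¹` has degree at
most 9. -/
theorem stmt15 {K : Type*} [Field K] [CharZero K] {n : ℕ}
    (a : Matrix (Fin n) (Fin n) K)
    (L : Fin n → MvPolynomial (Fin n) K)
    (hL : ∀ i, L i = ∑ j, C (a i j) * X j)
    (H F : Fin n → MvPolynomial (Fin n) K)
    (hH : ∀ i, H i = L i ^ 3)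
    (hF : ∀ i, F i = X i + H i)
    (hJ : (Matrix.of fun i j => pderiv j (H i)) *
          (Matrix.of fun i j => pderiv j (H i)) *
          (Matrix.of fun i j => pderiv j (H i)) = 0) :
    (∀ i, seqP F 5 i = 0) ∧
    (∀ i, seqP F 4 i =
      6 * ∑ j, ∑ k, ∑ l, C (a i j * a i k * a i l) * L j ^ 3 * L k ^ 3 * L l ^ 3) ∧
    (∃ G : Fin n → MvPolynomial (Fin n) K,
      (∀ i, bind₁ F (G i) = X i) ∧ ∀ i, (G i).totalDegree ≤ 9) := by
  obtain ⟨M, hM⟩ : ∃ M' : Fin n → MvPolynomial (Fin n) K,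
      M' = fun i => ∑ j, C (a i j) * L j ^ 3 := ⟨_, rfl⟩
  have hMdef : ∀ i, M i = ∑ j, C (a i j) * L j ^ 3 := fun i => by rw [hM]
  -- derivative of H
  have hd : ∀ i j, pderiv j (H i) = 3 * L i ^ 2 * C (a i j) := by
    intro i j
    have h1 : pderiv j (L i) = C (a i j) := by
      rw [hL]; simp [pderiv_X, Pi.single_apply, mul_ite]
    rw [hH, Derivation.leibniz_pow, h1]
    simp [smul_eq_mul]; ring
  -- zero rows
  have hA0 : ∀ i, L i = 0 → ∀ j, a i j = 0 := by
    intro i h0 j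
    have h := (hL i).symm.trans h0
    have := congrArg (coeff (Finsupp.single j 1)) h
    simp [coeff_sum, coeff_C_mul, coeff_X', Finsupp.single_left_inj] at this
    simpa using this
  -- the key identity S = 0
  have hS : ∀ i l, ∑ j, ∑ k,
      C (a i j * a j k * a k l) * (L j ^ 2 * L k ^ 2) = 0 := by
    intro i l
    have hE : ∑ k, (∑ j, (3 * L i ^ 2 * C (a i j)) * (3 * L j ^ 2 * C (a j k)))
        * (3 * L k ^ 2 * C (a k l)) = 0 := by
      have := congrFun (congrFun hJ i) l
      simpa [Matrix.mul_apply, hd] using this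
    have hE2 : (27 : MvPolynomial (Fin n) K) * L i ^ 2 *
        (∑ j, ∑ k, C (a i j * a j k * a k l) * (L j ^ 2 * L k ^ 2)) = 0 := by
      rw [← hE]
      simp only [Finset.mul_sum, Finset.sum_mul]
      rw [Finset.sum_comm]
      refine Finset.sum_congr rfl fun k _ => Finset.sum_congr rfl fun j _ => ?_
      simp only [map_mul]; ring
    rcases mul_eq_zero.1 hE2 with h | h
    · rcases mul_eq_zero.1 h with h | h
      · exact absurd h (by norm_num)
      · have hLi : L i = 0 := pow_eq_zero_iff (by norm_num) |>.1 h
        refine Finset.sum_eq_zero fun j _ => Finset.sum_eq_zero fun k _ => ?_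
        rw [hA0 i hLi j]
        simp
    · exact h
  -- generic contraction lemma
  have hKey : ∀ (P Q : Fin n → MvPolynomial (Fin n) K) (i : Fin n),
      ∑ j, C (a i j) * (P j * (∑ k, C (a j k) * (Q k * L k)))
      = ∑ l, (∑ j, ∑ k, C (a i j * a j k * a k l) * (P j * Q k)) * X l := by
    intro P Q i
    have e1 : ∀ j, C (a i j) * (P j * (∑ k, C (a j k) * (Q k * L k)))
        = ∑ k, ∑ l, C (a i j * a j k * a k l) * (P j * Q k) * X l := by
      intro j
      have e2 : ∀ k, C (a i j) * (P j * (C (a j k) * (Q k * L k)))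
          = ∑ l, C (a i j * a j k * a k l) * (P j * Q k) * X l := by
        intro k
        rw [hL k]
        simp only [Finset.mul_sum]
        refine Finset.sum_congr rfl fun l _ => ?_
        simp only [map_mul]; ring
      calc C (a i j) * (P j * (∑ k, C (a j k) * (Q k * L k)))
          = ∑ k, C (a i j) * (P j * (C (a j k) * (Q k * L k))) := by
            simp only [Finset.mul_sum]
        _ = ∑ k, ∑ l, C (a i j * a j k * a k l) * (P j * Q k) * X l :=
            Finset.sum_congr rfl fun k _ => e2 k
    calc ∑ j, C (a i j) * (P j * (∑ k, C (a j k) * (Q k * L k)))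
        = ∑ j, ∑ k, ∑ l, C (a i j * a j k * a k l) * (P j * Q k) * X l :=
          Finset.sum_congr rfl fun j _ => e1 j
      _ = ∑ l, ∑ j, ∑ k, C (a i j * a j k * a k l) * (P j * Q k) * X l :=
          (Finset.sum_congr rfl fun j _ => Finset.sum_comm).trans Finset.sum_comm
      _ = ∑ l, (∑ j, ∑ k, C (a i j * a j k * a k l) * (P j * Q k)) * X l := by
          refine Finset.sum_congr rfl fun l _ => ?_
          rw [Finset.sum_mul]
          exact Finset.sum_congr rfl fun j _ => (Finset.sum_mul _ _ _).symm
  -- inner-sum rewiring lemmas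
  have hMrw : ∀ j, ∑ k, C (a j k) * (L k ^ 2 * L k) = M j := by
    intro j; rw [hM]
    exact Finset.sum_congr rfl fun k _ => by ring
  -- N = 0
  have hN : ∀ i, ∑ j, C (a i j) * (L j ^ 2 * M j) = 0 := by
    intro i
    have h := hKey (fun j => L j ^ 2) (fun k => L k ^ 2) i
    simp only [hMrw] at h
    rw [h]
    refine Finset.sum_eq_zero fun l _ => ?_
    rw [hS i l, zero_mul]
  have hNrw : ∀ j, ∑ k, C (a j k) * ((L k * M k) * L k) = 0 := by
    intro j
    rw [← hN j]
    exact Finset.sum_congr rfl fun k _ => by ring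
  -- the substitution X ↦ X + t·H
  set Ψ : MvPolynomial (Fin n) K →ₐ[K] Polynomial (MvPolynomial (Fin n) K) :=
    aeval (fun m => Polynomial.C (X m) + Polynomial.X * Polynomial.C (L m ^ 3)) with hΨdef
  have hΨC : ∀ c : K, Ψ (C c) = Polynomial.C (C c) := by
    intro c
    rw [hΨdef, aeval_C]
    simp only [Polynomial.algebraMap_apply, MvPolynomial.algebraMap_eq]
  have hΨL : ∀ j, Ψ (L j) = Polynomial.C (L j) + Polynomial.X * Polynomial.C (M j) := by
    intro j
    have e : ∀ m, Ψ (C (a j m) * X m)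
        = Polynomial.C (C (a j m) * X m)
          + Polynomial.X * Polynomial.C (C (a j m) * L m ^ 3) := by
      intro m
      rw [map_mul Ψ, hΨC, hΨdef, aeval_X]
      simp only [map_mul]
      ring
    calc Ψ (L j) = ∑ m, Ψ (C (a j m) * X m) := by rw [hL j, map_sum]
      _ = ∑ m, (Polynomial.C (C (a j m) * X m)
            + Polynomial.X * Polynomial.C (C (a j m) * L m ^ 3)) :=
          Finset.sum_congr rfl fun m _ => e m
      _ = Polynomial.C (L j) + Polynomial.X * Polynomial.C (M j) := by
          rw [Finset.sum_add_distrib, ← map_sum, ← Finset.mul_sum, ← map_sum, ← hL j, hM]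
  have hΨS : ∀ i l, ∑ j, ∑ k, Polynomial.C (C (a i j * a j k * a k l)) *
      ((Polynomial.C (L j) + Polynomial.X * Polynomial.C (M j))^2 *
       ((Polynomial.C (L k) + Polynomial.X * Polynomial.C (M k))^2)) = 0 := by
    intro i l
    have h0 := congrArg Ψ (hS i l)
    rw [map_zero] at h0
    simp only [map_sum Ψ] at h0
    rw [← h0]
    refine Finset.sum_congr rfl fun j _ => Finset.sum_congr rfl fun k _ => ?_
    conv_rhs => rw [map_mul Ψ, map_mul Ψ, map_pow Ψ, map_pow Ψ, hΨC, hΨL j, hΨL k]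
  -- coefficient extractions
  have hC1 : ∀ i l, ∑ j, ∑ k, C (a i j * a j k * a k l) *
      (2 * L j * M j * L k ^ 2 + 2 * L j ^ 2 * L k * M k) = 0 := by
    intro i l
    have h0 := congrArg (fun p => Polynomial.coeff p 1) (hΨS i l)
    simp only [Polynomial.finset_sum_coeff, Polynomial.coeff_C_mul, Polynomial.coeff_zero,
      quartic_coeff1] at h0
    exact h0
  have hC2 : ∀ i l, ∑ j, ∑ k, C (a i j * a j k * a k l) *
      (M j ^ 2 * L k ^ 2 + 4 * (L j * M j * L k * M k) + L j ^ 2 * M k ^ 2) = 0 := by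
    intro i l
    have h0 := congrArg (fun p => Polynomial.coeff p 2) (hΨS i l)
    simp only [Polynomial.finset_sum_coeff, Polynomial.coeff_C_mul, Polynomial.coeff_zero,
      quartic_coeff2] at h0
    exact h0
  -- R = 0
  have hR : ∀ i, ∑ j, C (a i j) * (L j * M j ^ 2) = 0 := by
    intro i
    have hUV : ∀ l, (∑ j, ∑ k, C (a i j * a j k * a k l) * ((L j * M j) * L k ^ 2))
        + (∑ j, ∑ k, C (a i j * a j k * a k l) * (L j ^ 2 * (L k * M k))) = 0 := by
      intro l
      have h2 : (2 : MvPolynomial (Fin n) K) *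
          ((∑ j, ∑ k, C (a i j * a j k * a k l) * ((L j * M j) * L k ^ 2))
          + (∑ j, ∑ k, C (a i j * a j k * a k l) * (L j ^ 2 * (L k * M k)))) = 0 := by
        rw [← hC1 i l, mul_add, Finset.mul_sum, Finset.mul_sum, ← Finset.sum_add_distrib]
        refine Finset.sum_congr rfl fun j _ => ?_
        rw [Finset.mul_sum, Finset.mul_sum, ← Finset.sum_add_distrib]
        exact Finset.sum_congr rfl fun k _ => by ring
      rcases mul_eq_zero.1 h2 with h | h
      · exact absurd h (by norm_num)
      · exact h
    have hA := hKey (fun j => L j * M j) (fun k => L k ^ 2) i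
    have hB := hKey (fun j => L j ^ 2) (fun k => L k * M k) i
    simp only [hMrw] at hA
    simp only [hNrw, mul_zero, Finset.sum_const_zero] at hB
    calc ∑ j, C (a i j) * (L j * M j ^ 2)
        = ∑ j, C (a i j) * ((L j * M j) * M j) :=
          Finset.sum_congr rfl fun j _ => by ring
      _ = ∑ l, (∑ j, ∑ k, C (a i j * a j k * a k l) * ((L j * M j) * L k ^ 2)) * X l := hA
      _ = (∑ l, (∑ j, ∑ k, C (a i j * a j k * a k l) * ((L j * M j) * L k ^ 2)) * X l)
          + (∑ l, (∑ j, ∑ k, C (a i j * a j k * a k l) * (L j ^ 2 * (L k * M k))) * X l) := by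
          rw [← hB, add_zero]
      _ = ∑ l, ((∑ j, ∑ k, C (a i j * a j k * a k l) * ((L j * M j) * L k ^ 2))
          + (∑ j, ∑ k, C (a i j * a j k * a k l) * (L j ^ 2 * (L k * M k)))) * X l := by
          rw [← Finset.sum_add_distrib]
          exact Finset.sum_congr rfl fun l _ => (add_mul _ _ _).symm
      _ = 0 := by
          refine Finset.sum_eq_zero fun l _ => ?_
          rw [hUV l, zero_mul]
  have hRrw : ∀ j, ∑ k, C (a j k) * (M k ^ 2 * L k) = 0 := by
    intro j
    rw [← hR j]
    exact Finset.sum_congr rfl fun k _ => by ring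
  -- Q = 0
  have hQ : ∀ i, ∑ j, C (a i j) * M j ^ 3 = 0 := by
    intro i
    have hW : ∀ l, (∑ j, ∑ k, C (a i j * a j k * a k l) * (M j ^ 2 * L k ^ 2))
        + 4 * (∑ j, ∑ k, C (a i j * a j k * a k l) * ((L j * M j) * (L k * M k)))
        + (∑ j, ∑ k, C (a i j * a j k * a k l) * (L j ^ 2 * M k ^ 2)) = 0 := by
      intro l
      rw [← hC2 i l, Finset.mul_sum, ← Finset.sum_add_distrib, ← Finset.sum_add_distrib]
      refine Finset.sum_congr rfl fun j _ => ?_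
      rw [Finset.mul_sum, ← Finset.sum_add_distrib, ← Finset.sum_add_distrib]
      exact Finset.sum_congr rfl fun k _ => by ring
    have hA := hKey (fun j => M j ^ 2) (fun k => L k ^ 2) i
    have hB := hKey (fun j => L j * M j) (fun k => L k * M k) i
    have hC := hKey (fun j => L j ^ 2) (fun k => M k ^ 2) i
    simp only [hMrw] at hA
    simp only [hNrw, mul_zero, Finset.sum_const_zero] at hB
    simp only [hRrw, mul_zero, Finset.sum_const_zero] at hC
    calc ∑ j, C (a i j) * M j ^ 3
        = ∑ j, C (a i j) * (M j ^ 2 * M j) :=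
          Finset.sum_congr rfl fun j _ => by ring
      _ = ∑ l, (∑ j, ∑ k, C (a i j * a j k * a k l) * (M j ^ 2 * L k ^ 2)) * X l := hA
      _ = (∑ l, (∑ j, ∑ k, C (a i j * a j k * a k l) * (M j ^ 2 * L k ^ 2)) * X l)
          + 4 * (∑ l, (∑ j, ∑ k, C (a i j * a j k * a k l) * ((L j * M j) * (L k * M k))) * X l)
          + (∑ l, (∑ j, ∑ k, C (a i j * a j k * a k l) * (L j ^ 2 * M k ^ 2)) * X l) := by
          rw [← hB, ← hC, mul_zero, add_zero, add_zero]
      _ = ∑ l, ((∑ j, ∑ k, C (a i j * a j k * a k l) * (M j ^ 2 * L k ^ 2))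
          + 4 * (∑ j, ∑ k, C (a i j * a j k * a k l) * ((L j * M j) * (L k * M k)))
          + (∑ j, ∑ k, C (a i j * a j k * a k l) * (L j ^ 2 * M k ^ 2))) * X l := by
          rw [Finset.mul_sum, ← Finset.sum_add_distrib, ← Finset.sum_add_distrib]
          refine Finset.sum_congr rfl fun l _ => by ring
      _ = 0 := by
          refine Finset.sum_eq_zero fun l _ => ?_
          rw [hW l, zero_mul]
  -- behaviour of bind₁ F
  have hbL : ∀ j, bind₁ F (L j) = L j + M j := by
    intro j
    calc bind₁ F (L j) = ∑ m, bind₁ F (C (a j m) * X m) := by rw [hL j, map_sum]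
      _ = ∑ m, (C (a j m) * X m + C (a j m) * L m ^ 3) := by
          refine Finset.sum_congr rfl fun m _ => ?_
          rw [map_mul, bind₁_C_right, bind₁_X_right, hF m, hH m, mul_add]
      _ = L j + M j := by
          rw [Finset.sum_add_distrib, ← hL j, hM]
  have hbM : ∀ i, bind₁ F (M i) = M i := by
    intro i
    have e1 : bind₁ F (M i) = ∑ j, C (a i j) * (L j + M j) ^ 3 := by
      conv_lhs => rw [hMdef i]
      simp only [map_sum, map_mul, map_pow, bind₁_C_right, hbL]
    rw [e1]
    have e2 : ∀ j, C (a i j) * (L j + M j) ^ 3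
        = C (a i j) * L j ^ 3 + 3 * (C (a i j) * (L j ^ 2 * M j))
          + 3 * (C (a i j) * (L j * M j ^ 2)) + C (a i j) * M j ^ 3 := fun j => by ring
    rw [Finset.sum_congr rfl fun j _ => e2 j]
    simp only [Finset.sum_add_distrib, ← Finset.mul_sum]
    rw [hN i, hR i, hQ i, ← hMdef i]
    ring
  -- closed forms for the P sequence
  have hP1 : ∀ i, seqP F 1 i = L i ^ 3 := by
    intro i
    show bind₁ F (seqP F 0 i) - seqP F 0 i = L i ^ 3
    show bind₁ F (X i) - X i = L i ^ 3
    rw [bind₁_X_right, hF i, hH i]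
    ring
  have hP2 : ∀ i, seqP F 2 i = (L i + M i) ^ 3 - L i ^ 3 := by
    intro i
    show bind₁ F (seqP F 1 i) - seqP F 1 i = _
    rw [hP1 i, map_pow, hbL i]
  have hP3 : ∀ i, seqP F 3 i = (L i + 2 * M i) ^ 3 - 2 * (L i + M i) ^ 3 + L i ^ 3 := by
    intro i
    show bind₁ F (seqP F 2 i) - seqP F 2 i = _
    rw [hP2 i, map_sub, map_pow, map_pow, map_add, hbL i, hbM i]
    ring
  have hP4 : ∀ i, seqP F 4 i = 6 * M i ^ 3 := by
    intro i
    show bind₁ F (seqP F 3 i) - seqP F 3 i = _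
    rw [hP3 i]
    simp only [map_add, map_sub, map_mul, map_pow, map_ofNat, hbL i, hbM i]
    ring
  have hP5 : ∀ i, seqP F 5 i = 0 := by
    intro i
    show bind₁ F (seqP F 4 i) - seqP F 4 i = 0
    rw [hP4 i]
    simp only [map_mul, map_pow, map_ofNat, hbM i]
    ring
  refine ⟨hP5, ?_, ?_⟩
  · -- the explicit formula for P₄
    intro i
    rw [hP4 i]
    have : M i ^ 3 = ∑ j, ∑ k, ∑ l,
        C (a i j * a i k * a i l) * L j ^ 3 * L k ^ 3 * L l ^ 3 := by
      have : M i ^ 3 = (∑ j, C (a i j) * L j ^ 3) * ((∑ k, C (a i k) * L k ^ 3)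
          * (∑ l, C (a i l) * L l ^ 3)) := by rw [hM]; ring
      rw [this]
      simp only [Finset.sum_mul, Finset.mul_sum]
      refine Finset.sum_congr rfl fun j _ => Finset.sum_congr rfl fun k _ =>
        Finset.sum_congr rfl fun l _ => ?_
      simp only [map_mul]
      ring
    rw [this]
  · -- the inverse polynomial map
    refine ⟨fun i => seqP F 0 i - seqP F 1 i + seqP F 2 i - seqP F 3 i + seqP F 4 i,
      ?_, ?_⟩
    · intro i
      have hb : ∀ k, bind₁ F (seqP F k i) = seqP F (k + 1) i + seqP F k i := by
        intro k
        show bind₁ F (seqP F k i) = bind₁ F (seqP F k i) - seqP F k i + seqP F k i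
        ring
      simp only [map_add, map_sub, hb, hP5 i]
      show _ = seqP F 0 i
      ring
    · intro i
      -- total degree bounds
      have tL : ∀ j, (L j).totalDegree ≤ 1 := by
        intro j
        rw [hL j]
        refine (totalDegree_finset_sum univ _).trans (Finset.sup_le fun j _ => ?_)
        refine (totalDegree_mul _ _).trans ?_
        simp [totalDegree_C, totalDegree_X]
      have tM : ∀ j, (M j).totalDegree ≤ 3 := by
        intro j
        rw [hM]
        refine (totalDegree_finset_sum univ _).trans (Finset.sup_le fun k _ => ?_)
        refine (totalDegree_mul _ _).trans ?_
        simp only [totalDegree_C, zero_add]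
        exact (totalDegree_pow _ _).trans (by
          have := tL k
          omega)
      have t2 : ((2 : MvPolynomial (Fin n) K)).totalDegree = 0 := by
        rw [← map_ofNat (C : K →+* MvPolynomial (Fin n) K) 2]
        exact totalDegree_C _
      have t6 : ((6 : MvPolynomial (Fin n) K)).totalDegree = 0 := by
        rw [← map_ofNat (C : K →+* MvPolynomial (Fin n) K) 6]
        exact totalDegree_C _
      have tLM : ∀ (c : MvPolynomial (Fin n) K) j, c.totalDegree = 0 →
          ((L j + c * M j) ^ 3).totalDegree ≤ 9 := by
        intro c j hc
        have hdeg : (L j + c * M j).totalDegree ≤ 3 := by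
          refine (totalDegree_add _ _).trans (max_le ?_ ?_)
          · exact (tL j).trans (by norm_num)
          · refine (totalDegree_mul _ _).trans ?_
            rw [hc]
            simpa using tM j
        refine (totalDegree_pow _ _).trans ?_
        omega
      have sub9 : ∀ p q : MvPolynomial (Fin n) K, p.totalDegree ≤ 9 →
          q.totalDegree ≤ 9 → (p - q).totalDegree ≤ 9 :=
        fun p q hp hq => (totalDegree_sub p q).trans (max_le hp hq)
      have add9 : ∀ p q : MvPolynomial (Fin n) K, p.totalDegree ≤ 9 →
          q.totalDegree ≤ 9 → (p + q).totalDegree ≤ 9 :=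
        fun p q hp hq => (totalDegree_add p q).trans (max_le hp hq)
      have tP0 : (seqP F 0 i).totalDegree ≤ 9 := by
        show (X i : MvPolynomial (Fin n) K).totalDegree ≤ 9
        rw [totalDegree_X]
        norm_num
      have tL3 : ((L i) ^ 3).totalDegree ≤ 9 := by
        refine (totalDegree_pow _ _).trans ?_
        have := tL i
        omega
      have tM3 : ((M i) ^ 3).totalDegree ≤ 9 := by
        refine (totalDegree_pow _ _).trans ?_
        have := tM i
        omega
      have tP1 : (seqP F 1 i).totalDegree ≤ 9 := by rw [hP1 i]; exact tL3
      have hone : ((L i + M i) ^ 3).totalDegree ≤ 9 := by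
        have := tLM 1 i (by simp [totalDegree_one])
        simpa using this
      have tP2 : (seqP F 2 i).totalDegree ≤ 9 := by
        rw [hP2 i]
        exact sub9 _ _ hone tL3
      have tP3 : (seqP F 3 i).totalDegree ≤ 9 := by
        rw [hP3 i]
        refine add9 _ _ (sub9 _ _ (tLM 2 i t2) ?_) tL3
        refine (totalDegree_mul _ _).trans ?_
        rw [t2]
        simpa using hone
      have tP4 : (seqP F 4 i).totalDegree ≤ 9 := by
        rw [hP4 i]
        refine (totalDegree_mul _ _).trans ?_
        rw [t6]
        simpa using tM3
      exact add9 _ _ (sub9 _ _ (add9 _ _ (sub9 _ _ tP0 tP1) tP2) tP3) tP4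
end

section
/- Let L_i = Σ_j a_{ij}X_j be linear forms over a field K of characteristic 0 and suppose Σ_{j,k} a_{ij}a_{jk}a_{kl} L_j^2 L_k^2 = 0 for all i, l. Then Σ_{j,k} a_{ij}a_{jk} L_j^2 L_k^3 = 0 for all i, and Σ_{j,k} a_{ij}a_{jk}a_{jm} L_j L_k^3 = 0 for all i, m. -/
open MvPolynomial Finset

/-- If `∑_{j,k} a_{ij}a_{jk}a_{kl}L_j²L_k² = 0` for all `i, l`, then
`∑_{j,k} a_{ij}a_{jk}L_j²L_k³ = 0` for all `i` and
`∑_{j,k} a_{ij}a_{jk}a_{jm}L_jL_k³ = 0` for all `i, m`. -/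
theorem stmt16 {K : Type*} [Field K] [CharZero K] {n : ℕ}
    (a : Matrix (Fin n) (Fin n) K)
    (L : Fin n → MvPolynomial (Fin n) K)
    (hL : ∀ i, L i = ∑ j, C (a i j) * X j)
    (hyp : ∀ i l, ∑ j, ∑ k, C (a i j * a j k * a k l) * L j ^ 2 * L k ^ 2 = 0) :
    (∀ i, ∑ j, ∑ k, C (a i j * a j k) * L j ^ 2 * L k ^ 3 = 0) ∧
    (∀ i m, ∑ j, ∑ k, C (a i j * a j k * a j m) * L j * L k ^ 3 = 0) := by
  have hLd : ∀ j m, pderiv m (L j) = C (a j m) := by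
    intro j m
    rw [hL]
    simp [Pi.single_apply]
  -- differentiate the hypothesis
  have hder : ∀ i l m, ∑ j, ∑ k, C (a i j * a j k * a k l) *
      (2 * C (a j m) * L j * L k ^ 2 + 2 * C (a k m) * L j ^ 2 * L k) = 0 := by
    intro i l m
    have h := congrArg (pderiv m) (hyp i l)
    simp only [map_sum, map_zero] at h
    rw [← h]
    refine Finset.sum_congr rfl fun j _ => Finset.sum_congr rfl fun k _ => ?_
    simp only [pderiv_mul, pderiv_pow, pderiv_C, hLd]
    ring
  -- second claim
  have S1 : ∀ i m, ∑ j, ∑ k, C (a i j * a j k * a j m) * L j * L k ^ 3 = 0 := by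
    intro i m
    have h0 : ∑ l, X l * (∑ j, ∑ k, C (a i j * a j k * a k l) *
        (2 * C (a j m) * L j * L k ^ 2 + 2 * C (a k m) * L j ^ 2 * L k)) = 0 := by
      simp only [hder, mul_zero, Finset.sum_const_zero]
    have inner : ∀ j k, (∑ l, X l * (C (a i j * a j k * a k l) *
        (2 * C (a j m) * L j * L k ^ 2 + 2 * C (a k m) * L j ^ 2 * L k))) =
        2 * (C (a i j * a j k * a j m) * L j * L k ^ 3)
        + 2 * (C (a i j * a j k * a k m) * L j ^ 2 * L k ^ 2) := by
      intro j k
      have step : ∀ l, X l * (C (a i j * a j k * a k l) *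
          (2 * C (a j m) * L j * L k ^ 2 + 2 * C (a k m) * L j ^ 2 * L k)) =
          C (a k l) * X l * (C (a i j * a j k) *
          (2 * C (a j m) * L j * L k ^ 2 + 2 * C (a k m) * L j ^ 2 * L k)) := by
        intro l
        simp only [C_mul]
        ring
      simp only [step]
      rw [← Finset.sum_mul, ← hL k]
      simp only [C_mul]
      ring
    have h1 : ∑ l, X l * (∑ j, ∑ k, C (a i j * a j k * a k l) *
        (2 * C (a j m) * L j * L k ^ 2 + 2 * C (a k m) * L j ^ 2 * L k)) =
        2 * (∑ j, ∑ k, C (a i j * a j k * a j m) * L j * L k ^ 3)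
        + 2 * (∑ j, ∑ k, C (a i j * a j k * a k m) * L j ^ 2 * L k ^ 2) := by
      calc ∑ l, X l * (∑ j, ∑ k, C (a i j * a j k * a k l) *
            (2 * C (a j m) * L j * L k ^ 2 + 2 * C (a k m) * L j ^ 2 * L k))
          = ∑ j, ∑ k, ∑ l, X l * (C (a i j * a j k * a k l) *
            (2 * C (a j m) * L j * L k ^ 2 + 2 * C (a k m) * L j ^ 2 * L k)) := by
            simp only [Finset.mul_sum]
            rw [Finset.sum_comm]
            exact Finset.sum_congr rfl fun j _ => by rw [Finset.sum_comm]
        _ = ∑ j, ∑ k, (2 * (C (a i j * a j k * a j m) * L j * L k ^ 3)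
            + 2 * (C (a i j * a j k * a k m) * L j ^ 2 * L k ^ 2)) :=
            Finset.sum_congr rfl fun j _ => Finset.sum_congr rfl fun k _ => inner j k
        _ = _ := by simp only [Finset.sum_add_distrib, Finset.mul_sum]
    rw [h1, hyp i m, mul_zero, add_zero] at h0
    have h2 : (2 : MvPolynomial (Fin n) K) ≠ 0 := two_ne_zero
    exact (mul_eq_zero.mp h0).resolve_left h2
  refine ⟨?_, S1⟩
  intro i
  have h0 : ∑ m, X m * (∑ j, ∑ k, C (a i j * a j k * a j m) * L j * L k ^ 3) = 0 := by
    simp only [S1, mul_zero, Finset.sum_const_zero]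
  have h1 : ∑ m, X m * (∑ j, ∑ k, C (a i j * a j k * a j m) * L j * L k ^ 3) =
      ∑ j, ∑ k, C (a i j * a j k) * L j ^ 2 * L k ^ 3 := by
    calc ∑ m, X m * (∑ j, ∑ k, C (a i j * a j k * a j m) * L j * L k ^ 3)
        = ∑ j, ∑ k, ∑ m, X m * (C (a i j * a j k * a j m) * L j * L k ^ 3) := by
          simp only [Finset.mul_sum]
          rw [Finset.sum_comm]
          exact Finset.sum_congr rfl fun j _ => by rw [Finset.sum_comm]
      _ = _ := by
          refine Finset.sum_congr rfl fun j _ => Finset.sum_congr rfl fun k _ => ?_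
          have step : ∀ m, X m * (C (a i j * a j k * a j m) * L j * L k ^ 3) =
              C (a j m) * X m * (C (a i j * a j k) * L j * L k ^ 3) := by
            intro m
            simp only [C_mul]
            ring
          simp only [step]
          rw [← Finset.sum_mul, ← hL j]
          simp only [C_mul]
          ring
  rw [← h1, h0]
end

section
/- Let H = (L_1^3,...,L_n^3) with L_i = Σ_j a_{ij}X_j linear forms over a field K of characteristic 0. If (JH)^3 = 0, then Σ_{j,k} a_{ij}a_{jk}a_{kl} L_j^2 L_k^2 = 0 for all i, l = 1,...,n. -/
open MvPolynomial Finset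

/-- For `H = (L_1³,…,L_n³)` with `L_i = ∑_j a_{ij}X_j`, if `(JH)³ = 0` then
`∑_{j,k} a_{ij}a_{jk}a_{kl}L_j²L_k² = 0` for all `i, l`. -/
theorem stmt17 {K : Type*} [Field K] [CharZero K] {n : ℕ}
    (a : Matrix (Fin n) (Fin n) K)
    (L : Fin n → MvPolynomial (Fin n) K)
    (hL : ∀ i, L i = ∑ j, C (a i j) * X j)
    (H : Fin n → MvPolynomial (Fin n) K)
    (hH : ∀ i, H i = L i ^ 3)
    (hJ : (Matrix.of fun i j => pderiv j (H i)) *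
          (Matrix.of fun i j => pderiv j (H i)) *
          (Matrix.of fun i j => pderiv j (H i)) = 0) :
    ∀ i l, ∑ j, ∑ k, C (a i j * a j k * a k l) * L j ^ 2 * L k ^ 2 = 0 := by
  intro i l
  have hd : ∀ p q : Fin n, pderiv q (L p) = C (a p q) := by
    intro p q
    rw [hL]
    simp [pderiv_X, Pi.single_apply]
  have hA : ∀ p q : Fin n, pderiv q (H p) = C (3 * a p q) * L p ^ 2 := by
    intro p q
    rw [hH, show (3:ℕ) = 2+1 from rfl, pow_succ, pderiv_mul, hd, pow_two, pderiv_mul, hd]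
    push_cast [map_mul, map_ofNat]
    ring
  have h0 := congrFun (congrFun hJ i) l
  simp only [Matrix.mul_apply, Matrix.of_apply, Matrix.zero_apply, hA] at h0
  have key : C (27:K) * L i ^ 2 * ∑ j, ∑ k, C (a i j * a j k * a k l) * L j ^ 2 * L k ^ 2 = 0 := by
    rw [← h0]
    simp only [Finset.mul_sum, Finset.sum_mul]
    rw [Finset.sum_comm]
    refine Finset.sum_congr rfl fun k _ => Finset.sum_congr rfl fun j _ => ?_
    simp only [map_mul, map_ofNat]
    ring
  rcases eq_or_ne (L i) 0 with h | h
  · have ha : ∀ j, a i j = 0 := by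
      intro j
      have := congrArg (coeff (Finsupp.single j 1)) (hL i ▸ h)
      simpa [coeff_sum, coeff_C_mul, coeff_X', Finsupp.single_left_inj (one_ne_zero (α := ℕ)), Finset.sum_ite_eq'] using this
    simp [ha]
  · rcases mul_eq_zero.mp key with h1 | hS
    · rcases mul_eq_zero.mp h1 with h2 | h3
      · exact absurd h2 (by simp)
      · exact absurd h3 (pow_ne_zero _ h)
    · exact hS
end

section
/- The polynomial map F of K^4 defined by F_1 = X_1, F_2 = X_2 - X_1^3/3, F_3 = X_3 - X_1^2X_2 - e_3X_1X_2^2 + g_4X_1X_2X_3 - k_3X_2^3 + m_4X_2^2X_3 + g_4^2X_2^2X_4, F_4 = X_4 - X_1^2X_3 - e_4X_1X_2^2 - (2m_4/g_4)X_1X_2X_3 - g_4X_1X_2X_4 - k_4X_2^3 - (m_4^2/g_4^2)X_2^2X_3 - m_4X_2^2X_4 (with g_4 ≠ 0) factors as F = G ∘ H, where H = (X_1, X_2, F_3, F_4) and G = (X_1, F_2, X_3, X_4), and both G and H are nice polynomial maps. -/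
open MvPolynomial Finset

set_option maxHeartbeats 4000000 in
/-- The eighth class in Hubbers' classification of cubic homogeneous
automorphisms of `K⁴` factors as `F = G ∘ H` with `H = (X₁, X₂, F₃, F₄)` and
`G = (X₁, F₂, X₃, X₄)`, both of which are nice. -/
theorem stmt18 {K : Type*} [Field K] [CharZero K]
    (e3 e4 g4 k3 k4 m4 : K) (hg4 : g4 ≠ 0)
    (F G H : Fin 4 → MvPolynomial (Fin 4) K)
    (hF : F = ![X 0,
      X 1 - C (3⁻¹ : K) * X 0 ^ 3,
      X 2 - X 0 ^ 2 * X 1 - C e3 * X 0 * X 1 ^ 2 + C g4 * X 0 * X 1 * X 2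
        - C k3 * X 1 ^ 3 + C m4 * X 1 ^ 2 * X 2 + C (g4 ^ 2) * X 1 ^ 2 * X 3,
      X 3 - X 0 ^ 2 * X 2 - C e4 * X 0 * X 1 ^ 2 - C (2 * m4 / g4) * X 0 * X 1 * X 2
        - C g4 * X 0 * X 1 * X 3 - C k4 * X 1 ^ 3 - C (m4 ^ 2 / g4 ^ 2) * X 1 ^ 2 * X 2
        - C m4 * X 1 ^ 2 * X 3])
    (hH : H = ![X 0, X 1, F 2, F 3])
    (hG : G = ![X 0, F 1, X 2, X 3]) :
    (∀ i, F i = bind₁ H (G i)) ∧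
    (∃ m, ∀ i, seqP H m i = 0) ∧
    (∃ m, ∀ i, seqP G m i = 0) := by
  obtain ⟨t, rfl⟩ : ∃ t, m4 = g4 * t := ⟨m4 / g4, by field_simp⟩
  rw [show 2 * (g4 * t) / g4 = 2 * t by field_simp,
      show (g4 * t) ^ 2 / g4 ^ 2 = t ^ 2 by field_simp] at hF
  have hH0 : H 0 = X 0 := by rw [hH]; rfl
  have hH1 : H 1 = X 1 := by rw [hH]; rfl
  have hH2 : H 2 = F 2 := by rw [hH]; rfl
  have hH3 : H 3 = F 3 := by rw [hH]; rfl
  have hF2 : F 2 = X 2 - X 0 ^ 2 * X 1 - C e3 * X 0 * X 1 ^ 2 + C g4 * X 0 * X 1 * X 2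
        - C k3 * X 1 ^ 3 + C (g4 * t) * X 1 ^ 2 * X 2 + C (g4 ^ 2) * X 1 ^ 2 * X 3 := by
    rw [hF]; rfl
  have hF3 : F 3 = X 3 - X 0 ^ 2 * X 2 - C e4 * X 0 * X 1 ^ 2 - C (2 * t) * X 0 * X 1 * X 2
        - C g4 * X 0 * X 1 * X 3 - C k4 * X 1 ^ 3 - C (t ^ 2) * X 1 ^ 2 * X 2
        - C (g4 * t) * X 1 ^ 2 * X 3 := by rw [hF]; rfl
  have b0 : bind₁ H (X (0 : Fin 4)) = X 0 := by rw [bind₁_X_right, hH0]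
  have b1 : bind₁ H (X (1 : Fin 4)) = X 1 := by rw [bind₁_X_right, hH1]
  have b2 : bind₁ H (X (2 : Fin 4)) = X 2 - X 0 ^ 2 * X 1 - C e3 * X 0 * X 1 ^ 2
        + C g4 * X 0 * X 1 * X 2 - C k3 * X 1 ^ 3 + C (g4 * t) * X 1 ^ 2 * X 2
        + C (g4 ^ 2) * X 1 ^ 2 * X 3 := by rw [bind₁_X_right, hH2, hF2]
  have b3 : bind₁ H (X (3 : Fin 4)) = X 3 - X 0 ^ 2 * X 2 - C e4 * X 0 * X 1 ^ 2
        - C (2 * t) * X 0 * X 1 * X 2 - C g4 * X 0 * X 1 * X 3 - C k4 * X 1 ^ 3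
        - C (t ^ 2) * X 1 ^ 2 * X 2 - C (g4 * t) * X 1 ^ 2 * X 3 := by
    rw [bind₁_X_right, hH3, hF3]
  have hG0 : G 0 = X 0 := by rw [hG]; rfl
  have hG1 : G 1 = X 1 - C (3⁻¹ : K) * X 0 ^ 3 := by rw [hG, hF]; rfl
  have hG2 : G 2 = X 2 := by rw [hG]; rfl
  have hG3 : G 3 = X 3 := by rw [hG]; rfl
  refine ⟨?_, ⟨3, ?_⟩, ⟨2, ?_⟩⟩
  · intro i
    fin_cases i
    · show F 0 = bind₁ H (G 0)
      rw [hG0, b0, hF]; rfl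
    · show F 1 = bind₁ H (G 1)
      rw [hG1, map_sub, map_mul, map_pow, bind₁_C_right, b0, b1, hF]; rfl
    · show F 2 = bind₁ H (G 2)
      rw [hG2, b2, hF2]
    · show F 3 = bind₁ H (G 3)
      rw [hG3, b3, hF3]
  · have s0 : seqP H 2 0 = 0 := by
      show bind₁ H (bind₁ H (X 0) - X 0) - (bind₁ H (X 0) - X 0) = 0
      rw [b0]; simp
    have s1 : seqP H 2 1 = 0 := by
      show bind₁ H (bind₁ H (X 1) - X 1) - (bind₁ H (X 1) - X 1) = 0
      rw [b1]; simp
    have s2 : seqP H 2 2 = -C (g4*k3*t : K)*X 1^5 - C (g4^2*k4 : K)*X 1^5 - C (g4*k3 : K)*X 0*X 1^4 - C (e4*g4^2 : K)*X 0*X 1^4 - C (e3*g4*t : K)*X 0*X 1^4 - C (g4*t : K)*X 0^2*X 1^3 - C (e3*g4 : K)*X 0^2*X 1^3 - C (g4 : K)*X 0^3*X 1^2 := by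
      show bind₁ H (bind₁ H (X 2) - X 2) - (bind₁ H (X 2) - X 2) = _
      simp only [map_sub, map_add, map_mul, map_pow, bind₁_C_right, b0, b1, b2, b3]
      push_cast [map_mul, map_pow, map_ofNat]
      ring
    have s3 : seqP H 2 3 = C (k3*t^2 : K)*X 1^5 + C (g4*k4*t : K)*X 1^5 + C (2*k3*t : K)*X 0*X 1^4 + C (g4*k4 : K)*X 0*X 1^4 + C (e4*g4*t : K)*X 0*X 1^4 + C (e3*t^2 : K)*X 0*X 1^4 + C (t^2 : K)*X 0^2*X 1^3 + C (k3 : K)*X 0^2*X 1^3 + C (e4*g4 : K)*X 0^2*X 1^3 + C (2*e3*t : K)*X 0^2*X 1^3 + C (2*t : K)*X 0^3*X 1^2 + C (e3 : K)*X 0^3*X 1^2 + X 0^4*X 1 := by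
      show bind₁ H (bind₁ H (X 3) - X 3) - (bind₁ H (X 3) - X 3) = _
      simp only [map_sub, map_add, map_mul, map_pow, bind₁_C_right, b0, b1, b2, b3]
      push_cast [map_mul, map_pow, map_ofNat]
      ring
    intro i
    fin_cases i
    · show bind₁ H (seqP H 2 0) - seqP H 2 0 = 0
      rw [s0]; simp
    · show bind₁ H (seqP H 2 1) - seqP H 2 1 = 0
      rw [s1]; simp
    · show bind₁ H (seqP H 2 2) - seqP H 2 2 = 0
      rw [s2]
      simp only [map_sub, map_add, map_mul, map_pow, bind₁_C_right, b0, b1, map_neg]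
      ring
    · show bind₁ H (seqP H 2 3) - seqP H 2 3 = 0
      rw [s3]
      simp only [map_sub, map_add, map_mul, map_pow, bind₁_C_right, b0, b1, map_neg]
      ring
  · have c0 : bind₁ G (X (0 : Fin 4)) = X 0 := by rw [bind₁_X_right, hG0]
    have c1 : bind₁ G (X (1 : Fin 4)) = X 1 - C (3⁻¹ : K) * X 0 ^ 3 := by
      rw [bind₁_X_right, hG1]
    have c2 : bind₁ G (X (2 : Fin 4)) = X 2 := by rw [bind₁_X_right, hG2]
    have c3 : bind₁ G (X (3 : Fin 4)) = X 3 := by rw [bind₁_X_right, hG3]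
    intro i
    fin_cases i
    · show bind₁ G (bind₁ G (X 0) - X 0) - (bind₁ G (X 0) - X 0) = 0
      rw [c0]; simp
    · show bind₁ G (bind₁ G (X 1) - X 1) - (bind₁ G (X 1) - X 1) = 0
      rw [c1]
      simp only [map_sub, map_add, map_mul, map_pow, bind₁_C_right, c0, c1]
      ring
    · show bind₁ G (bind₁ G (X 2) - X 2) - (bind₁ G (X 2) - X 2) = 0
      rw [c2]; simp
    · show bind₁ G (bind₁ G (X 3) - X 3) - (bind₁ G (X 3) - X 3) = 0
      rw [c3]; simp
end

section
/- The polynomial automorphism f of K^4 given by f_1 = x_1 + p x_4, f_2 = x_2 - p x_3, f_3 = x_3 + x_4^3, f_4 = x_4, where p = x_1x_3 + x_2x_4, is not nice: for every m there exists i with p_m^i ≠ 0. -/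
open MvPolynomial Finset

/-- The integer orbit of `(0,1,0,1)` under `f`. -/
def orb (j : ℕ) : Fin 4 → ℤ :=
  ![(Nat.fib (2 * j) : ℤ), (Nat.fib (2 * j + 1) : ℤ) - j * Nat.fib (2 * j), (j : ℤ), 1]

lemma fibZ2 (j : ℕ) :
    (Nat.fib (2 * (j + 1)) : ℤ) = Nat.fib (2 * j) + Nat.fib (2 * j + 1) := by
  rw [show 2 * (j + 1) = 2 * j + 2 by ring, Nat.fib_add_two]
  push_cast; ring

lemma fibZ3 (j : ℕ) :
    (Nat.fib (2 * (j + 1) + 1) : ℤ) = Nat.fib (2 * j) + 2 * Nat.fib (2 * j + 1) := by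
  rw [show 2 * (j + 1) + 1 = (2 * j + 1) + 2 by ring, Nat.fib_add_two,
    show 2 * j + 1 + 1 = 2 * j + 2 by ring, Nat.fib_add_two]
  push_cast; ring

lemma z0 (j : ℕ) :
    orb j 0 + (orb j 0 * orb j 2 + orb j 1 * orb j 3) * orb j 3 = orb (j + 1) 0 := by
  simp only [orb, Matrix.cons_val_zero, Matrix.cons_val_one, Matrix.head_cons, Matrix.cons_val]
  norm_num [fibZ2]
  ring

lemma z1 (j : ℕ) :
    orb j 1 - (orb j 0 * orb j 2 + orb j 1 * orb j 3) * orb j 2 = orb (j + 1) 1 := by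
  simp only [orb, Matrix.cons_val_zero, Matrix.cons_val_one, Matrix.head_cons, Matrix.cons_val]
  norm_num [fibZ2, fibZ3]
  generalize (Nat.fib (2 * j) : ℤ) = a
  generalize (Nat.fib (2 * j + 1) : ℤ) = b
  ring

lemma z2 (j : ℕ) : orb j 2 + orb j 3 ^ 3 = orb (j + 1) 2 := by
  simp only [orb, Matrix.cons_val_zero, Matrix.cons_val_one, Matrix.head_cons, Matrix.cons_val]
  norm_num

lemma z3 (j : ℕ) : orb j 3 = orb (j + 1) 3 := by
  simp [orb]

section
variable {K : Type*} [Field K] [CharZero K]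

noncomputable def Ff : Fin 4 → MvPolynomial (Fin 4) K :=
  ![X 0 + (X 0 * X 2 + X 1 * X 3) * X 3,
    X 1 - (X 0 * X 2 + X 1 * X 3) * X 2,
    X 2 + X 3 ^ 3,
    X 3]

noncomputable def pt (j : ℕ) : Fin 4 → K := fun i => ((orb j i : ℤ) : K)

lemma step (j : ℕ) (i : Fin 4) :
    aeval (pt j : Fin 4 → K) (Ff i : MvPolynomial (Fin 4) K) = pt (j + 1) i := by
  have h0 := congrArg (Int.cast : ℤ → K) (z0 j)
  have h1 := congrArg (Int.cast : ℤ → K) (z1 j)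
  have h2 := congrArg (Int.cast : ℤ → K) (z2 j)
  have h3 := congrArg (Int.cast : ℤ → K) (z3 j)
  push_cast at h0 h1 h2 h3
  fin_cases i
  · simpa [Ff, pt] using h0
  · simpa [Ff, pt] using h1
  · simpa [Ff, pt] using h2
  · simpa [Ff, pt] using h3

lemma evalP (k j : ℕ) :
    aeval (pt j : Fin 4 → K) (seqP (Ff : Fin 4 → MvPolynomial (Fin 4) K) k 0)
      = ((Nat.fib (2 * j + k) : ℤ) : K) := by
  induction k generalizing j with
  | zero => simp [seqP, pt, orb]
  | succ k ih =>
      have hb : aeval (pt j : Fin 4 → K)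
          (bind₁ (Ff : Fin 4 → MvPolynomial (Fin 4) K)
            (seqP (Ff : Fin 4 → MvPolynomial (Fin 4) K) k 0))
          = aeval (pt (j + 1) : Fin 4 → K)
            (seqP (Ff : Fin 4 → MvPolynomial (Fin 4) K) k 0) := by
        rw [aeval_bind₁]
        have hfun : (fun i => aeval (pt j : Fin 4 → K) (Ff i : MvPolynomial (Fin 4) K))
            = (pt (j + 1) : Fin 4 → K) := funext (step j)
        rw [hfun]
      simp only [seqP, map_sub, hb, ih]
      have h : (Nat.fib (2 * (j + 1) + k) : ℤ)
          = Nat.fib (2 * j + k) + Nat.fib (2 * j + (k + 1)) := by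
        rw [show 2 * (j + 1) + k = (2 * j + k) + 2 by ring, Nat.fib_add_two,
          show 2 * j + (k + 1) = 2 * j + k + 1 by ring]
        push_cast; ring
      have h' := congrArg (Int.cast : ℤ → K) h
      push_cast at h' ⊢
      rw [h']
      ring

end

/-- The automorphism `f = (x₁ + px₄, x₂ - px₃, x₃ + x₄³, x₄)` of `K⁴`, with
`p = x₁x₃ + x₂x₄`, is not nice: for every `m` there is an `i` with
`p_m^i ≠ 0`. -/
theorem stmt19 {K : Type*} [Field K] [CharZero K] :
    ∀ m : ℕ, ∃ i,
      seqP (![X 0 + (X 0 * X 2 + X 1 * X 3) * X 3,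
              X 1 - (X 0 * X 2 + X 1 * X 3) * X 2,
              X 2 + X 3 ^ 3,
              X 3] : Fin 4 → MvPolynomial (Fin 4) K) m i ≠ 0 := by
  intro m
  refine ⟨0, ?_⟩
  match m with
  | 0 => exact X_ne_zero (0 : Fin 4)
  | m + 1 =>
      intro h
      have key := evalP (K := K) (m + 1) 0
      rw [show (![X 0 + (X 0 * X 2 + X 1 * X 3) * X 3,
              X 1 - (X 0 * X 2 + X 1 * X 3) * X 2,
              X 2 + X 3 ^ 3,
              X 3] : Fin 4 → MvPolynomial (Fin 4) K) = Ff from rfl] at h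
      rw [h] at key
      simp only [map_zero] at key
      have hf : Nat.fib (2 * 0 + (m + 1)) ≠ 0 := (Nat.fib_pos.2 (by omega)).ne'
      exact hf (by exact_mod_cast key.symm)
end
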